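/- arXiv:2303.12819 — 2 statements merged into one kernel-verified Lean document; each statement's English description precedes it below -/
import Mathlib

section
/- Let R₁ and R₂ be invertible Hermitian trace-one operators on a finite-dimensional complex Hilbert space and let α ∈ [0,1]. Then α·S(R₁) + (1−α)·S(R₂) ≤ S̃(α|R₁| + (1−α)|R₂|), where |R| = √(R†R), S(R) = −Tr(|R| log|R|), and for a positive definite operator A, S̃(A) = −Tr(A log A) with log the matrix logarithm by functional calculus. -/
open Matrix
open scoped ComplexOrder

/-- `|R| = √(Rᴴ R)`, the positive semidefinite absolute value of a matrix. -/
noncomputable def absM {n : ℕ} (R : Matrix (Fin n) (Fin n) ℂ) :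
    Matrix (Fin n) (Fin n) ℂ :=
  (Matrix.posSemidef_conjTranspose_mul_self R).1.eigenvectorUnitary.1 *
    diagonal (((↑) : ℝ → ℂ) ∘ Real.sqrt ∘ (Matrix.posSemidef_conjTranspose_mul_self R).1.eigenvalues) *
    (star (Matrix.posSemidef_conjTranspose_mul_self R).1.eigenvectorUnitary : Matrix (Fin n) (Fin n) ℂ)

/-- The matrix logarithm via the continuous functional calculus. -/
noncomputable def matLog {n : ℕ} (A : Matrix (Fin n) (Fin n) ℂ) :
    Matrix (Fin n) (Fin n) ℂ :=
  cfc Real.log A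

/-! ### Auxiliary lemmas -/

lemma scalarKlein {a c : ℝ} (ha : 0 < a) (hc : 0 < c) :
    a - c + a * Real.log c ≤ a * Real.log a := by
  have h := Real.log_le_sub_one_of_pos (div_pos hc ha)
  rw [Real.log_div hc.ne' ha.ne', div_sub_one ha.ne'] at h
  have h2 := mul_le_mul_of_nonneg_left h ha.le
  rw [mul_div_cancel₀ _ ha.ne'] at h2
  nlinarith

lemma kleinReal {n : ℕ} (a c : Fin n → ℝ) (p : Fin n → Fin n → ℝ)
    (hp : ∀ i j, 0 ≤ p i j) (hrow : ∀ i, ∑ j, p i j = 1) (hcol : ∀ j, ∑ i, p i j = 1)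
    (ha : ∀ i, 0 < a i) (hc : ∀ j, 0 < c j) :
    ∑ i, a i - ∑ j, c j + ∑ i, ∑ j, a i * Real.log (c j) * p i j
      ≤ ∑ i, a i * Real.log (a i) := by
  have e1 : ∑ i, a i = ∑ i, ∑ j, a i * p i j := by
    refine Finset.sum_congr rfl fun i _ => ?_
    rw [← Finset.mul_sum, hrow i, mul_one]
  have e2 : ∑ j, c j = ∑ i, ∑ j, c j * p i j := by
    rw [Finset.sum_comm]
    refine Finset.sum_congr rfl fun j _ => ?_
    rw [← Finset.mul_sum, hcol j, mul_one]
  have e3 : ∑ i, a i * Real.log (a i) = ∑ i, ∑ j, a i * Real.log (a i) * p i j := by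
    refine Finset.sum_congr rfl fun i _ => ?_
    rw [← Finset.mul_sum, hrow i, mul_one]
  rw [e1, e2, e3, ← Finset.sum_sub_distrib, ← Finset.sum_add_distrib]
  refine Finset.sum_le_sum fun i _ => ?_
  rw [← Finset.sum_sub_distrib, ← Finset.sum_add_distrib]
  refine Finset.sum_le_sum fun j _ => ?_
  have := scalarKlein (ha i) (hc j)
  nlinarith [hp i j]

lemma trace_unitary_conj {n : ℕ} (U M : Matrix (Fin n) (Fin n) ℂ)
    (hU : star U * U = 1) : (U * M * star U).trace = M.trace := by
  rw [Matrix.trace_mul_cycle, hU, Matrix.one_mul]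

lemma trace_cross {n : ℕ} (U V : Matrix (Fin n) (Fin n) ℂ) (d e : Fin n → ℂ)
    (hU : star U * U = 1) (hU' : U * star U = 1) :
    ((U * diagonal d * star U) * (V * diagonal e * star V)).trace
      = (diagonal d * ((star U * V) * (diagonal e * star (star U * V)))).trace := by
  have h1 : (U * diagonal d * star U) * (V * diagonal e * star V)
      = U * (diagonal d * ((star U * V) * (diagonal e * star (star U * V)))) * star U := by
    rw [StarMul.star_mul, star_star]
    simp only [Matrix.mul_assoc, hU', Matrix.mul_one]
  rw [h1, trace_unitary_conj _ _ hU]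

lemma trace_diag_conj {n : ℕ} (d e : Fin n → ℂ) (W : Matrix (Fin n) (Fin n) ℂ) :
    (diagonal d * (W * (diagonal e * star W))).trace
      = ∑ i, ∑ j, d i * e j * (W i j * star (W i j)) := by
  simp only [Matrix.trace, Matrix.diag, Matrix.mul_apply, Matrix.diagonal, Matrix.star_apply,
    Matrix.of_apply, Finset.sum_ite_eq, Finset.mem_univ, if_true, ite_mul, zero_mul]
  rw [Finset.sum_congr rfl]
  intro i _
  rw [Finset.mul_sum, Finset.sum_congr rfl]
  intro j _
  ring

/-- Klein's inequality for the matrix logarithm: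
`Tr A − Tr C + Tr(A log C) ≤ Tr(A log A)` for positive definite `A, C`. -/
lemma klein {n : ℕ} {A C : Matrix (Fin n) (Fin n) ℂ} (hA : A.PosDef) (hC : C.PosDef) :
    A.trace - C.trace + (A * matLog C).trace ≤ (A * matLog A).trace := by
  have hAh := hA.1
  have hCh := hC.1
  set U : Matrix (Fin n) (Fin n) ℂ := (hAh.eigenvectorUnitary : Matrix (Fin n) (Fin n) ℂ) with hUdef
  set V : Matrix (Fin n) (Fin n) ℂ := (hCh.eigenvectorUnitary : Matrix (Fin n) (Fin n) ℂ) with hVdef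
  set a := hAh.eigenvalues
  set c := hCh.eigenvalues
  have hU1 : star U * U = 1 := Matrix.mem_unitaryGroup_iff'.mp (hAh.eigenvectorUnitary).2
  have hU2 : U * star U = 1 := Matrix.mem_unitaryGroup_iff.mp (hAh.eigenvectorUnitary).2
  have hV1 : star V * V = 1 := Matrix.mem_unitaryGroup_iff'.mp (hCh.eigenvectorUnitary).2
  have hV2 : V * star V = 1 := Matrix.mem_unitaryGroup_iff.mp (hCh.eigenvectorUnitary).2
  have hspecA : A = U * diagonal (RCLike.ofReal ∘ a) * star U := hAh.spectral_theorem
  have hspecC : C = V * diagonal (RCLike.ofReal ∘ c) * star V := hCh.spectral_theorem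
  have hlogA : matLog A = U * diagonal (RCLike.ofReal ∘ Real.log ∘ a) * star U := by
    rw [matLog, hAh.cfc_eq]; rfl
  have hlogC : matLog C = V * diagonal (RCLike.ofReal ∘ Real.log ∘ c) * star V := by
    rw [matLog, hCh.cfc_eq]; rfl
  set W : Matrix (Fin n) (Fin n) ℂ := star U * V with hWdef
  have hsW : star W = star V * U := by rw [hWdef, StarMul.star_mul, star_star]
  have hW1 : W * star W = 1 := by
    rw [hWdef, hsW, Matrix.mul_assoc, ← Matrix.mul_assoc V, hV2, Matrix.one_mul, hU1]
  have hW2 : star W * W = 1 := by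
    rw [hWdef, hsW, Matrix.mul_assoc, ← Matrix.mul_assoc U, hU2, Matrix.one_mul, hV1]
  set p : Fin n → Fin n → ℝ := fun i j => Complex.normSq (W i j) with hpdef
  have hWp : ∀ i j, W i j * star (W i j) = ((p i j : ℝ) : ℂ) := fun i j => by
    rw [hpdef]; exact Complex.mul_conj (W i j)
  have hp : ∀ i j, 0 ≤ p i j := fun i j => Complex.normSq_nonneg _
  have hrow : ∀ i, ∑ j, p i j = 1 := by
    intro i
    have := congrFun (congrFun hW1 i) i
    rw [Matrix.mul_apply] at this
    simp only [Matrix.one_apply_eq] at this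
    have h2 : ∑ j, ((p i j : ℝ) : ℂ) = 1 := by
      rw [← this]
      refine Finset.sum_congr rfl fun j _ => ?_
      rw [Matrix.star_apply, hWp i j]
    rw [← Complex.ofReal_sum] at h2
    exact_mod_cast h2
  have hcol : ∀ j, ∑ i, p i j = 1 := by
    intro j
    have := congrFun (congrFun hW2 j) j
    rw [Matrix.mul_apply] at this
    simp only [Matrix.one_apply_eq] at this
    have h2 : ∑ i, ((p i j : ℝ) : ℂ) = 1 := by
      rw [← this]
      refine Finset.sum_congr rfl fun i _ => ?_
      rw [Matrix.star_apply, ← hWp i j, mul_comm]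
    rw [← Complex.ofReal_sum] at h2
    exact_mod_cast h2
  have tA : A.trace = ((∑ i, a i : ℝ) : ℂ) := by
    conv_lhs => rw [hspecA]
    rw [trace_unitary_conj _ _ hU1, Matrix.trace_diagonal]
    push_cast
    rfl
  have tC : C.trace = ((∑ j, c j : ℝ) : ℂ) := by
    conv_lhs => rw [hspecC]
    rw [trace_unitary_conj _ _ hV1, Matrix.trace_diagonal]
    push_cast
    rfl
  have tAA : (A * matLog A).trace = ((∑ i, a i * Real.log (a i) : ℝ) : ℂ) := by
    rw [hlogA]
    have : A * (U * diagonal (RCLike.ofReal ∘ Real.log ∘ a) * star U)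
        = (U * diagonal (RCLike.ofReal ∘ a) * star U)
          * (U * diagonal (RCLike.ofReal ∘ Real.log ∘ a) * star U) := by
      rw [← hspecA]
    rw [this, trace_cross _ _ _ _ hU1 hU2, hU1]
    rw [star_one, Matrix.one_mul, Matrix.mul_one, Matrix.diagonal_mul_diagonal,
      Matrix.trace_diagonal]
    push_cast
    simp [Function.comp]
  have tAC : (A * matLog C).trace
      = ((∑ i, ∑ j, a i * Real.log (c j) * p i j : ℝ) : ℂ) := by
    rw [hlogC]
    have h0 : A * (V * diagonal (RCLike.ofReal ∘ Real.log ∘ c) * star V)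
        = (U * diagonal (RCLike.ofReal ∘ a) * star U)
          * (V * diagonal (RCLike.ofReal ∘ Real.log ∘ c) * star V) := by
      rw [← hspecA]
    rw [h0, trace_cross _ _ _ _ hU1 hU2, ← hWdef, trace_diag_conj]
    push_cast
    refine Finset.sum_congr rfl fun i _ => Finset.sum_congr rfl fun j _ => ?_
    rw [hWp i j]
    simp [Function.comp]
  rw [tA, tC, tAA, tAC, ← Complex.ofReal_sub, ← Complex.ofReal_add, Complex.real_le_real]
  exact kleinReal a c p hp hrow hcol (fun i => hA.eigenvalues_pos i) (fun j => hC.eigenvalues_pos j)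

lemma posDef_of_posSemidef_isUnit {n : ℕ} {M : Matrix (Fin n) (Fin n) ℂ}
    (hM : M.PosSemidef) (hu : IsUnit M) : M.PosDef := by
  exact hM.posDef_iff_isUnit.mpr hu

lemma absM_posDef {n : ℕ} {R : Matrix (Fin n) (Fin n) ℂ} (hu : IsUnit R) :
    (absM R).PosDef := by
  have hP : (Rᴴ * R).PosDef := PosDef.conjTranspose_mul_self R (mulVec_injective_of_isUnit hu)
  have hd : (diagonal (((↑) : ℝ → ℂ) ∘ Real.sqrt ∘
      (Matrix.posSemidef_conjTranspose_mul_self R).1.eigenvalues)).PosDef :=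
    PosDef.diagonal fun i => Complex.zero_lt_real.mpr (Real.sqrt_pos.mpr (hP.eigenvalues_pos i))
  exact hd.mul_mul_conjTranspose_same
    (vecMul_injective_of_isUnit Unitary.isUnit_coe)

lemma combo_posDef {n : ℕ} {A B : Matrix (Fin n) (Fin n) ℂ}
    (hA : A.PosDef) (hB : B.PosDef) (α : ℝ) (h0 : 0 ≤ α) (h1 : α ≤ 1) :
    ((α : ℂ) • A + (1 - (α : ℂ)) • B).PosDef := by
  have hβ : (1 - (α : ℂ)) = ((1 - α : ℝ) : ℂ) := by push_cast; ring
  refine PosDef.of_dotProduct_mulVec_pos ?_ ?_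
  · rw [Matrix.IsHermitian, Matrix.conjTranspose_add, Matrix.conjTranspose_smul,
      Matrix.conjTranspose_smul, hA.1, hB.1, hβ, Complex.star_def, Complex.conj_ofReal,
      Complex.conj_ofReal]
  · intro x hx
    have hAx := hA.dotProduct_mulVec_pos hx
    have hBx := hB.dotProduct_mulVec_pos hx
    rw [Matrix.add_mulVec, Matrix.smul_mulVec, Matrix.smul_mulVec,
      dotProduct_add, dotProduct_smul, dotProduct_smul, smul_eq_mul, smul_eq_mul]
    rcases eq_or_lt_of_le h0 with h | h
    · simp only [← h, Complex.ofReal_zero, zero_mul, sub_zero, one_mul, zero_add]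
      exact hBx
    · calc (0:ℂ) < (α : ℂ) * (star x ⬝ᵥ A *ᵥ x) :=
          mul_pos (by exact_mod_cast Complex.zero_lt_real.mpr h) hAx
      _ ≤ (α : ℂ) * (star x ⬝ᵥ A *ᵥ x) + (1 - (α : ℂ)) * (star x ⬝ᵥ B *ᵥ x) := by
          refine le_add_of_nonneg_right (mul_nonneg ?_ hBx.le)
          rw [hβ]
          exact Complex.zero_le_real.mpr (by linarith)

/-- weak concavity of space-time entropy: for invertible
Hermitian trace-one `R₁, R₂` and `α ∈ [0,1]`,
`α S(R₁) + (1−α) S(R₂) ≤ S̃(α|R₁| + (1−α)|R₂|)`, where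
`S(R) = −Tr(|R| log|R|)` and `S̃(A) = −Tr(A log A)`. -/
theorem spacetime_entropy_weak_concavity
    (n : ℕ) (R₁ R₂ : Matrix (Fin n) (Fin n) ℂ)
    (h₁ : R₁.IsHermitian) (h₂ : R₂.IsHermitian)
    (hTr₁ : R₁.trace = 1) (hTr₂ : R₂.trace = 1)
    (hu₁ : IsUnit R₁) (hu₂ : IsUnit R₂)
    (α : ℝ) (hα₀ : 0 ≤ α) (hα₁ : α ≤ 1) :
    (α : ℂ) * (-(absM R₁ * matLog (absM R₁)).trace) +
        (1 - (α : ℂ)) * (-(absM R₂ * matLog (absM R₂)).trace) ≤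
      -((((α : ℂ) • absM R₁ + (1 - (α : ℂ)) • absM R₂) *
          matLog ((α : ℂ) • absM R₁ + (1 - (α : ℂ)) • absM R₂)).trace) := by
  set A := absM R₁ with hAdef
  set B := absM R₂ with hBdef
  set C := (α : ℂ) • A + (1 - (α : ℂ)) • B with hCdef
  have hA : A.PosDef := absM_posDef hu₁
  have hB : B.PosDef := absM_posDef hu₂
  have hC : C.PosDef := combo_posDef hA hB α hα₀ hα₁
  have hα' : (0 : ℂ) ≤ (α : ℂ) := Complex.zero_le_real.mpr hα₀
  have hβ' : (0 : ℂ) ≤ 1 - (α : ℂ) := by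
    have : (1 - (α : ℂ)) = ((1 - α : ℝ) : ℂ) := by push_cast; ring
    rw [this]
    exact Complex.zero_le_real.mpr (by linarith)
  have h1 : -(A * matLog A).trace ≤ C.trace - A.trace - (A * matLog C).trace := by
    have := klein hA hC
    have h' := neg_le_neg this
    calc -(A * matLog A).trace ≤ -(A.trace - C.trace + (A * matLog C).trace) := h'
    _ = C.trace - A.trace - (A * matLog C).trace := by ring
  have h2 : -(B * matLog B).trace ≤ C.trace - B.trace - (B * matLog C).trace := by
    have := klein hB hC
    have h' := neg_le_neg this
    calc -(B * matLog B).trace ≤ -(B.trace - C.trace + (B * matLog C).trace) := h'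
    _ = C.trace - B.trace - (B * matLog C).trace := by ring
  have hCt : C.trace = (α : ℂ) * A.trace + (1 - (α : ℂ)) * B.trace := by
    rw [hCdef, Matrix.trace_add, Matrix.trace_smul, Matrix.trace_smul, smul_eq_mul, smul_eq_mul]
  have hCL : (C * matLog C).trace
      = (α : ℂ) * (A * matLog C).trace + (1 - (α : ℂ)) * (B * matLog C).trace := by
    conv_lhs => rw [hCdef]
    rw [Matrix.add_mul, Matrix.smul_mul, Matrix.smul_mul, Matrix.trace_add,
      Matrix.trace_smul, Matrix.trace_smul, smul_eq_mul, smul_eq_mul]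
  calc (α : ℂ) * (-(A * matLog A).trace) + (1 - (α : ℂ)) * (-(B * matLog B).trace)
      ≤ (α : ℂ) * (C.trace - A.trace - (A * matLog C).trace)
        + (1 - (α : ℂ)) * (C.trace - B.trace - (B * matLog C).trace) :=
        add_le_add (mul_le_mul_of_nonneg_left h1 hα') (mul_le_mul_of_nonneg_left h2 hβ')
    _ = -((C * matLog C).trace) := by rw [hCL, hCt]; ring
end

section
/- Fix d ≥ 1. Let I_A and I_B be finite 'input' and 'output' index sets, let 𝒜₁, …, 𝒜_k ⊆ I_A and ℬ₁, …, ℬ_k ⊆ I_B with ∪_i 𝒜_i = I_A and ∪_i ℬ_i = I_B, and for subsets 𝒜 ⊆ I_A, ℬ ⊆ I_B write H_{ℬ,𝒜} = (⊗_{b∈ℬ} ℂ^d) ⊗ (⊗_{a∈𝒜} ℂ^d). For each i let J_i be a Hermitian trace-one operator on H_{ℬ_i,𝒜_i} satisfying the trace-preservation condition Tr_{ℬ_i} J_i = 𝟙/d^{|𝒜_i|} (identity on the input factors, normalized). Assume the family is compatible: for all i, j, the partial traces of J_i and J_j over (ℬ_i \ ℬ_j) ∪ (𝒜_i \ 𝒜_j)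 and (ℬ_j \ ℬ_i) ∪ (𝒜_j \ 𝒜_i) respectively, onto the common factors indexed by (ℬ_i ∩ ℬ_j) ∪ (𝒜_i ∩ 𝒜_j), coincide. Then there exists a Hermitian trace-one operator J on H_{I_B, I_A} such that Tr_{I_B} J = 𝟙/d^{|I_A|} and, for every i, the partial trace of J over the complements of ℬ_i and 𝒜_i equals J_i. -/
set_option maxHeartbeats 1000000


open Matrix

section

variable {ι : Type*} [DecidableEq ι] {d : ℕ}

/-- Merge a function on a subset `t` with a function on `s \ t` into a
function on `s`. -/
def mergeFn (s t : Finset ι)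
    (f : {x // x ∈ t} → Fin d) (h : {x // x ∈ s \ t} → Fin d)
    (x : {x // x ∈ s}) : Fin d :=
  if hx : (x : ι) ∈ t then f ⟨x, hx⟩
  else h ⟨x, Finset.mem_sdiff.mpr ⟨x.2, hx⟩⟩

end

variable {ιB ιA : Type*} [Fintype ιB] [DecidableEq ιB] [Fintype ιA] [DecidableEq ιA]

/-- Partial trace of an operator on
`(⊗_{b ∈ sB} ℂ^d) ⊗ (⊗_{a ∈ sA} ℂ^d)` down to the factors indexed by
`tB` and `tA`, tracing out `sB \ tB` and `sA \ tA`. -/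
noncomputable def ptr2 {d : ℕ} (sB tB : Finset ιB) (sA tA : Finset ιA)
    (M : Matrix (({x // x ∈ sB} → Fin d) × ({x // x ∈ sA} → Fin d))
        (({x // x ∈ sB} → Fin d) × ({x // x ∈ sA} → Fin d)) ℂ) :
    Matrix (({x // x ∈ tB} → Fin d) × ({x // x ∈ tA} → Fin d))
        (({x // x ∈ tB} → Fin d) × ({x // x ∈ tA} → Fin d)) ℂ :=
  fun p q => ∑ hB : {x // x ∈ sB \ tB} → Fin d,
    ∑ hA : {x // x ∈ sA \ tA} → Fin d,
      M (mergeFn sB tB p.1 hB, mergeFn sA tA p.2 hA)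
        (mergeFn sB tB q.1 hB, mergeFn sA tA q.2 hA)

/-- Trace over all output factors (indexed by `sB`), leaving an operator on
the input factors (indexed by `sA`). -/
noncomputable def trOut {d : ℕ} (sB : Finset ιB) (sA : Finset ιA)
    (M : Matrix (({x // x ∈ sB} → Fin d) × ({x // x ∈ sA} → Fin d))
        (({x // x ∈ sB} → Fin d) × ({x // x ∈ sA} → Fin d)) ℂ) :
    Matrix ({x // x ∈ sA} → Fin d) ({x // x ∈ sA} → Fin d) ℂ :=
  fun f g => ∑ h : {x // x ∈ sB} → Fin d, M (h, f) (h, g)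


namespace HPTPaux

variable {ι : Type*} [Fintype ι] [DecidableEq ι] {d : ℕ}

abbrev Fn (ι : Type*) [Fintype ι] (d : ℕ) : Type _ :=
  {x // x ∈ (Finset.univ : Finset ι)} → Fin d

def ov (s : Finset ι) (p r : Fn ι d) : Fn ι d :=
  fun x => if (x : ι) ∈ s then p x else r x

lemma ov_ov (s t : Finset ι) (p r r' : Fn ι d) :
    ov t (ov s p r) r' = ov (s ∩ t) p (ov t r r') := by
  funext x
  by_cases hxt : (x : ι) ∈ t <;> by_cases hxs : (x : ι) ∈ s <;>
    simp [ov, hxt, hxs]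

lemma ov_univ (p r : Fn ι d) : ov Finset.univ p r = p := by
  funext x; simp [ov]

lemma ov_empty (p r : Fn ι d) : ov ∅ p r = r := by
  funext x; simp [ov]

lemma ov_ov_self (t : Finset ι) (a b : Fn ι d) :
    ov t (ov t a b) (ov t b a) = a := by
  funext x; by_cases hxt : (x : ι) ∈ t <;> simp [ov, hxt]

def res (t : Finset ι) (p : Fn ι d) : {x // x ∈ t} → Fin d :=
  fun x => p ⟨x, Finset.mem_univ _⟩

lemma res_mergeFn (t : Finset ι) (a : {x // x ∈ t} → Fin d)
    (h : {x // x ∈ Finset.univ \ t} → Fin d) :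
    res t (mergeFn Finset.univ t a h) = a := by
  funext x
  simp only [res, mergeFn, dif_pos x.2]

lemma resd_mergeFn (t : Finset ι) (a : {x // x ∈ t} → Fin d)
    (h : {x // x ∈ Finset.univ \ t} → Fin d) :
    res (Finset.univ \ t) (mergeFn Finset.univ t a h) = h := by
  funext x
  have hx : (x : ι) ∉ t := (Finset.mem_sdiff.mp x.2).2
  simp only [res, mergeFn, dif_neg hx]

lemma mergeFn_res (t : Finset ι) (p : Fn ι d) :
    mergeFn Finset.univ t (res t p) (res (Finset.univ \ t) p) = p := by
  funext x
  by_cases hx : (x : ι) ∈ t <;> simp [mergeFn, res, hx]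

def eqv (t : Finset ι) :
    Fn ι d ≃ ({x // x ∈ t} → Fin d) × ({x // x ∈ Finset.univ \ t} → Fin d) where
  toFun p := (res t p, res (Finset.univ \ t) p)
  invFun z := mergeFn Finset.univ t z.1 z.2
  left_inv p := mergeFn_res t p
  right_inv z := by
    obtain ⟨a, h⟩ := z
    exact Prod.ext (res_mergeFn t a h) (resd_mergeFn t a h)

omit [Fintype ι] in
lemma card_fun_finset (t : Finset ι) :
    Fintype.card ({x // x ∈ t} → Fin d) = d ^ t.card := by
  rw [Fintype.card_fun, Fintype.card_coe, Fintype.card_fin]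

lemma sum_res (t : Finset ι) (g : ({x // x ∈ t} → Fin d) → ℂ) :
    ∑ p : Fn ι d, g (res t p) =
      (d : ℂ) ^ ((Finset.univ \ t : Finset ι).card) * ∑ b, g b := by
  rw [← Equiv.sum_comp (eqv t).symm (fun p => g (res t p))]
  have : ∀ z : ({x // x ∈ t} → Fin d) × ({x // x ∈ Finset.univ \ t} → Fin d),
      g (res t ((eqv t).symm z)) = g z.1 := by
    intro z; rw [show res t ((eqv t).symm z) = z.1 from congrArg Prod.fst ((eqv t).right_inv z)]
  rw [Fintype.sum_congr _ _ this, Fintype.sum_prod_type]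
  simp only [Finset.sum_const, Finset.card_univ, nsmul_eq_mul]
  rw [← Finset.mul_sum, card_fun_finset, Nat.cast_pow]

lemma res_ov {tB sB : Finset ι} (h : tB ⊆ sB) (p r : Fn ι d) :
    res sB (ov tB p r) = mergeFn sB tB (res tB p) (res (sB \ tB) r) := by
  funext x
  by_cases hx : (x : ι) ∈ tB <;> simp [res, ov, mergeFn, hx]

lemma res_univ (p : Fn ι d) : res Finset.univ p = p := by
  funext x; simp only [res, Subtype.coe_eta]

section Pair

variable {ιB ιA : Type*} [Fintype ιB] [DecidableEq ιB] [Fintype ιA] [DecidableEq ιA]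
  {d : ℕ}

abbrev Pt (ιB ιA : Type*) [Fintype ιB] [Fintype ιA] (d : ℕ) : Type _ :=
  Fn ιB d × Fn ιA d

abbrev Mat (ιB ιA : Type*) [Fintype ιB] [DecidableEq ιB] [Fintype ιA] [DecidableEq ιA]
    (d : ℕ) : Type _ :=
  Matrix (Pt ιB ιA d) (Pt ιB ιA d) ℂ

def Agr (sB : Finset ιB) (sA : Finset ιA) (P Q : Pt ιB ιA d) : Prop :=
  (∀ x : {x // x ∈ (Finset.univ : Finset ιB)}, (x : ιB) ∉ sB → P.1 x = Q.1 x) ∧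
  (∀ x : {x // x ∈ (Finset.univ : Finset ιA)}, (x : ιA) ∉ sA → P.2 x = Q.2 x)

instance (sB : Finset ιB) (sA : Finset ιA) (P Q : Pt ιB ιA d) :
    Decidable (Agr sB sA P Q) := by
  unfold Agr; infer_instance

lemma agr_refl (sB : Finset ιB) (sA : Finset ιA) (P : Pt ιB ιA d) :
    Agr sB sA P P := ⟨fun _ _ => rfl, fun _ _ => rfl⟩

lemma agr_of_inter {sB tB : Finset ιB} {sA tA : Finset ιA} {P Q : Pt ιB ιA d}
    (h : Agr (sB ∩ tB) (sA ∩ tA) P Q) : Agr sB sA P Q :=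
  ⟨fun x hx => h.1 x (fun hm => hx (Finset.mem_of_mem_inter_left hm)),
   fun x hx => h.2 x (fun hm => hx (Finset.mem_of_mem_inter_left hm))⟩

def OV (sB : Finset ιB) (sA : Finset ιA) (P R : Pt ιB ιA d) : Pt ιB ιA d :=
  (ov sB P.1 R.1, ov sA P.2 R.2)

lemma OV_OV (sB tB : Finset ιB) (sA tA : Finset ιA) (P R R' : Pt ιB ιA d) :
    OV tB tA (OV sB sA P R) R' = OV (sB ∩ tB) (sA ∩ tA) P (OV tB tA R R') :=
  Prod.ext (ov_ov _ _ _ _ _) (ov_ov _ _ _ _ _)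

def swapOV (tB : Finset ιB) (tA : Finset ιA) :
    (Pt ιB ιA d × Pt ιB ιA d) ≃ (Pt ιB ιA d × Pt ιB ιA d) :=
  Function.Involutive.toPerm
    (fun z => (OV tB tA z.1 z.2, OV tB tA z.2 z.1))
    (by
      intro z
      refine Prod.ext (Prod.ext ?_ ?_) (Prod.ext ?_ ?_) <;>
        exact ov_ov_self _ _ _)

noncomputable def kap (ιB ιA : Type*) [Fintype ιB] [DecidableEq ιB] [Fintype ιA]
    [DecidableEq ιA] (d : ℕ) : ℂ :=
  (Fintype.card (Pt ιB ιA d) : ℂ)⁻¹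

noncomputable def cst (d : ℕ) (sB : Finset ιB) (sA : Finset ιA) : ℂ :=
  ((d : ℂ) ^ (((Finset.univ : Finset ιB) \ sB).card +
    ((Finset.univ : Finset ιA) \ sA).card))⁻¹

lemma card_pt : (Fintype.card (Pt ιB ιA d) : ℂ) =
    (d : ℂ) ^ ((Finset.univ : Finset ιB).card + (Finset.univ : Finset ιA).card) := by
  rw [Fintype.card_prod, card_fun_finset, card_fun_finset]
  push_cast [pow_add]
  ring

lemma kap_mul_card (hd : 1 ≤ d) :
    kap ιB ιA d * (Fintype.card (Pt ιB ιA d) : ℂ) = 1 := by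
  have hd0 : (d : ℂ) ≠ 0 := Nat.cast_ne_zero.mpr (by omega)
  rw [kap, inv_mul_cancel₀]
  rw [card_pt]
  exact pow_ne_zero _ hd0

noncomputable def EE (sB : Finset ιB) (sA : Finset ιA) (M : Mat ιB ιA d) :
    Mat ιB ιA d :=
  fun P Q => if Agr sB sA P Q then
    kap ιB ιA d * ∑ R : Pt ιB ιA d, M (OV sB sA P R) (OV sB sA Q R)
  else 0

noncomputable def emb (sB : Finset ιB) (sA : Finset ιA)
    (X : Matrix (({x // x ∈ sB} → Fin d) × ({x // x ∈ sA} → Fin d))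
      (({x // x ∈ sB} → Fin d) × ({x // x ∈ sA} → Fin d)) ℂ) : Mat ιB ιA d :=
  fun P Q => if Agr sB sA P Q then
    cst d sB sA * X (res sB P.1, res sA P.2) (res sB Q.1, res sA Q.2)
  else 0

noncomputable def CC (TB : Finset ιB) (TA : Finset ιA) (M : Mat ιB ιA d) :
    Mat ιB ιA d :=
  ∑ WB ∈ TB.powerset, ∑ WA ∈ TA.powerset,
    (((-1 : ℂ)) ^ ((TB \ WB).card) * ((-1 : ℂ)) ^ ((TA \ WA).card)) • EE WB WA M

lemma EE_comp (hd : 1 ≤ d) (sB tB : Finset ιB) (sA tA : Finset ιA) (M : Mat ιB ιA d) :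
    EE sB sA (EE tB tA M) = EE (sB ∩ tB) (sA ∩ tA) M := by
  funext P Q
  by_cases h : Agr sB sA P Q
  · have hiff : ∀ R : Pt ιB ιA d,
        Agr tB tA (OV sB sA P R) (OV sB sA Q R) ↔
          ((∀ x : {x // x ∈ (Finset.univ : Finset ιB)},
              (x : ιB) ∉ tB → (x : ιB) ∈ sB → P.1 x = Q.1 x) ∧
           (∀ x : {x // x ∈ (Finset.univ : Finset ιA)},
              (x : ιA) ∉ tA → (x : ιA) ∈ sA → P.2 x = Q.2 x)) := by
      intro R
      constructor
      · rintro ⟨h1, h2⟩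
        constructor
        · intro x hxt hxs
          have := h1 x hxt
          simpa [OV, ov, hxs] using this
        · intro x hxt hxs
          have := h2 x hxt
          simpa [OV, ov, hxs] using this
      · rintro ⟨h1, h2⟩
        constructor
        · intro x hxt
          by_cases hxs : (x : ιB) ∈ sB
          · simpa [OV, ov, hxs] using h1 x hxt hxs
          · simp [OV, ov, hxs]
        · intro x hxt
          by_cases hxs : (x : ιA) ∈ sA
          · simpa [OV, ov, hxs] using h2 x hxt hxs
          · simp [OV, ov, hxs]
    by_cases hc : (∀ x : {x // x ∈ (Finset.univ : Finset ιB)},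
        (x : ιB) ∉ tB → (x : ιB) ∈ sB → P.1 x = Q.1 x) ∧
        (∀ x : {x // x ∈ (Finset.univ : Finset ιA)},
        (x : ιA) ∉ tA → (x : ιA) ∈ sA → P.2 x = Q.2 x)
    · have hAgr2 : Agr (sB ∩ tB) (sA ∩ tA) P Q := by
        constructor
        · intro x hx
          by_cases hxs : (x : ιB) ∈ sB
          · exact hc.1 x (fun hxt => hx (Finset.mem_inter.mpr ⟨hxs, hxt⟩)) hxs
          · exact h.1 x hxs
        · intro x hx
          by_cases hxs : (x : ιA) ∈ sA
          · exact hc.2 x (fun hxt => hx (Finset.mem_inter.mpr ⟨hxs, hxt⟩)) hxs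
          · exact h.2 x hxs
      show (if Agr sB sA P Q then _ else 0) = (if Agr (sB ∩ tB) (sA ∩ tA) P Q then _ else 0)
      rw [if_pos h, if_pos hAgr2]
      have hstep : ∀ R : Pt ιB ιA d,
          EE tB tA M (OV sB sA P R) (OV sB sA Q R) =
            kap ιB ιA d * ∑ R' : Pt ιB ιA d,
              M (OV (sB ∩ tB) (sA ∩ tA) P (OV tB tA R R'))
                (OV (sB ∩ tB) (sA ∩ tA) Q (OV tB tA R R')) := by
        intro R
        rw [EE]
        rw [if_pos ((hiff R).mpr hc)]
        congr 1
        apply Finset.sum_congr rfl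
        intro R' _
        rw [OV_OV, OV_OV]
      rw [Fintype.sum_congr _ _ hstep]
      rw [← Finset.mul_sum, ← mul_assoc]
      have e1 : (∑ R : Pt ιB ιA d, ∑ R' : Pt ιB ιA d,
          M (OV (sB ∩ tB) (sA ∩ tA) P (OV tB tA R R'))
            (OV (sB ∩ tB) (sA ∩ tA) Q (OV tB tA R R'))) =
          ∑ z : Pt ιB ιA d × Pt ιB ιA d,
            M (OV (sB ∩ tB) (sA ∩ tA) P (OV tB tA z.1 z.2))
              (OV (sB ∩ tB) (sA ∩ tA) Q (OV tB tA z.1 z.2)) :=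
        (Fintype.sum_prod_type (f := fun z : Pt ιB ιA d × Pt ιB ιA d =>
          M (OV (sB ∩ tB) (sA ∩ tA) P (OV tB tA z.1 z.2))
            (OV (sB ∩ tB) (sA ∩ tA) Q (OV tB tA z.1 z.2)))).symm
      have e2 : (∑ z : Pt ιB ιA d × Pt ιB ιA d,
            M (OV (sB ∩ tB) (sA ∩ tA) P (OV tB tA z.1 z.2))
              (OV (sB ∩ tB) (sA ∩ tA) Q (OV tB tA z.1 z.2))) =
          ∑ z : Pt ιB ιA d × Pt ιB ιA d,
            M (OV (sB ∩ tB) (sA ∩ tA) P z.1) (OV (sB ∩ tB) (sA ∩ tA) Q z.1) :=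
        Equiv.sum_comp (swapOV tB tA)
          (fun z => M (OV (sB ∩ tB) (sA ∩ tA) P z.1) (OV (sB ∩ tB) (sA ∩ tA) Q z.1))
      have e3 : (∑ z : Pt ιB ιA d × Pt ιB ιA d,
            M (OV (sB ∩ tB) (sA ∩ tA) P z.1) (OV (sB ∩ tB) (sA ∩ tA) Q z.1)) =
          (Fintype.card (Pt ιB ιA d) : ℂ) * ∑ S : Pt ιB ιA d,
            M (OV (sB ∩ tB) (sA ∩ tA) P S) (OV (sB ∩ tB) (sA ∩ tA) Q S) := by
        rw [Fintype.sum_prod_type]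
        simp only [Finset.sum_const, Finset.card_univ, nsmul_eq_mul]
        rw [← Finset.mul_sum]
      rw [e1, e2, e3]
      have : kap ιB ιA d * kap ιB ιA d * ((Fintype.card (Pt ιB ιA d) : ℂ) *
          ∑ S : Pt ιB ιA d, M (OV (sB ∩ tB) (sA ∩ tA) P S) (OV (sB ∩ tB) (sA ∩ tA) Q S)) =
          (kap ιB ιA d * (Fintype.card (Pt ιB ιA d) : ℂ)) * (kap ιB ιA d *
          ∑ S : Pt ιB ιA d, M (OV (sB ∩ tB) (sA ∩ tA) P S) (OV (sB ∩ tB) (sA ∩ tA) Q S)) := by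
        ring
      rw [this, kap_mul_card hd, one_mul]
    · have h2 : ¬ Agr (sB ∩ tB) (sA ∩ tA) P Q := by
        intro hA
        apply hc
        constructor
        · intro x hxt hxs
          exact hA.1 x (fun hm => hxt (Finset.mem_of_mem_inter_right hm))
        · intro x hxt hxs
          exact hA.2 x (fun hm => hxt (Finset.mem_of_mem_inter_right hm))
      show (if Agr sB sA P Q then _ else 0) = (if Agr (sB ∩ tB) (sA ∩ tA) P Q then _ else 0)
      rw [if_pos h, if_neg h2]
      have : ∀ R : Pt ιB ιA d,
          EE tB tA M (OV sB sA P R) (OV sB sA Q R) = 0 := by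
        intro R
        rw [EE, if_neg (fun ha => hc ((hiff R).mp ha))]
      rw [Fintype.sum_congr _ _ this, Finset.sum_const_zero, mul_zero]
  · have h2 : ¬ Agr (sB ∩ tB) (sA ∩ tA) P Q := fun hc => h (agr_of_inter hc)
    show (if Agr sB sA P Q then _ else 0) = (if Agr (sB ∩ tB) (sA ∩ tA) P Q then _ else 0)
    rw [if_neg h, if_neg h2]

lemma card_pt_ne_zero (hd : 1 ≤ d) : (Fintype.card (Pt ιB ιA d) : ℂ) ≠ 0 := by
  have hd0 : (d : ℂ) ≠ 0 := Nat.cast_ne_zero.mpr (by omega)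
  rw [card_pt]
  exact pow_ne_zero _ hd0

lemma EE_zero (sB : Finset ιB) (sA : Finset ιA) :
    EE sB sA (0 : Mat ιB ιA d) = 0 := by
  funext P Q
  show (if Agr sB sA P Q then _ else 0) = (0 : ℂ)
  split
  · simp [Matrix.zero_apply]
  · rfl

lemma EE_add (sB : Finset ιB) (sA : Finset ιA) (M N : Mat ιB ιA d) :
    EE sB sA (M + N) = EE sB sA M + EE sB sA N := by
  funext P Q
  simp only [Matrix.add_apply]
  unfold EE
  by_cases h : Agr sB sA P Q
  · simp only [if_pos h, Matrix.add_apply, Finset.sum_add_distrib, mul_add]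
  · simp only [if_neg h, add_zero]

lemma EE_smul (sB : Finset ιB) (sA : Finset ιA) (c : ℂ) (M : Mat ιB ιA d) :
    EE sB sA (c • M) = c • EE sB sA M := by
  funext P Q
  simp only [Matrix.smul_apply, smul_eq_mul]
  unfold EE
  by_cases h : Agr sB sA P Q
  · simp only [if_pos h, Matrix.smul_apply, smul_eq_mul, ← Finset.mul_sum]
    ring
  · simp only [if_neg h, mul_zero]

lemma EE_sum {α : Type*} (sB : Finset ιB) (sA : Finset ιA) (s : Finset α)
    (f : α → Mat ιB ιA d) :
    EE sB sA (∑ a ∈ s, f a) = ∑ a ∈ s, EE sB sA (f a) := by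
  classical
  induction s using Finset.induction_on with
  | empty => simp [EE_zero]
  | insert _ _ hni ih =>
      rw [Finset.sum_insert hni, EE_add, ih, Finset.sum_insert hni]

lemma trace_EE (hd : 1 ≤ d) (sB : Finset ιB) (sA : Finset ιA) (M : Mat ιB ιA d) :
    (EE sB sA M).trace = M.trace := by
  rw [Matrix.trace, Matrix.trace]
  have : ∀ P : Pt ιB ιA d, (EE sB sA M).diag P =
      kap ιB ιA d * ∑ R : Pt ιB ιA d, M (OV sB sA P R) (OV sB sA P R) := by
    intro P
    show (if Agr sB sA P P then _ else 0) = _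
    rw [if_pos (agr_refl sB sA P)]
  rw [Fintype.sum_congr _ _ this, ← Finset.mul_sum]
  have e1 : (∑ P : Pt ιB ιA d, ∑ R : Pt ιB ιA d, M (OV sB sA P R) (OV sB sA P R)) =
      ∑ z : Pt ιB ιA d × Pt ιB ιA d, M (OV sB sA z.1 z.2) (OV sB sA z.1 z.2) :=
    (Fintype.sum_prod_type (f := fun z : Pt ιB ιA d × Pt ιB ιA d =>
      M (OV sB sA z.1 z.2) (OV sB sA z.1 z.2))).symm
  have e2 : (∑ z : Pt ιB ιA d × Pt ιB ιA d, M (OV sB sA z.1 z.2) (OV sB sA z.1 z.2)) =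
      ∑ z : Pt ιB ιA d × Pt ιB ιA d, M z.1 z.1 :=
    Equiv.sum_comp (swapOV sB sA) (fun z => M z.1 z.1)
  have e3 : (∑ z : Pt ιB ιA d × Pt ιB ιA d, M z.1 z.1) =
      (Fintype.card (Pt ιB ιA d) : ℂ) * ∑ S : Pt ιB ιA d, M S S := by
    rw [Fintype.sum_prod_type]
    simp only [Finset.sum_const, Finset.card_univ, nsmul_eq_mul]
    rw [← Finset.mul_sum]
  rw [e1, e2, e3, ← mul_assoc, kap_mul_card hd, one_mul]
  rfl

lemma agr_symm {sB : Finset ιB} {sA : Finset ιA} {P Q : Pt ιB ιA d} :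
    Agr sB sA P Q ↔ Agr sB sA Q P :=
  ⟨fun h => ⟨fun x hx => (h.1 x hx).symm, fun x hx => (h.2 x hx).symm⟩,
   fun h => ⟨fun x hx => (h.1 x hx).symm, fun x hx => (h.2 x hx).symm⟩⟩

lemma star_kap : star (kap ιB ιA d) = kap ιB ιA d := by
  rw [kap, star_inv₀]
  congr 1
  exact star_natCast _

lemma star_cst (sB : Finset ιB) (sA : Finset ιA) :
    star (cst d sB sA) = cst d sB sA := by
  rw [cst, star_inv₀, star_pow, star_natCast]

lemma conjTranspose_EE (sB : Finset ιB) (sA : Finset ιA) (M : Mat ιB ιA d) :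
    (EE sB sA M)ᴴ = EE sB sA Mᴴ := by
  funext P Q
  rw [Matrix.conjTranspose_apply]
  show star (if Agr sB sA Q P then _ else 0) = (if Agr sB sA P Q then _ else 0)
  by_cases h : Agr sB sA P Q
  · rw [if_pos (agr_symm.mp h), if_pos h, star_mul', star_kap]
    congr 1
    rw [star_sum]
    apply Finset.sum_congr rfl
    intro R _
    rw [Matrix.conjTranspose_apply]
  · rw [if_neg (fun hqp => h (agr_symm.mpr hqp)), if_neg h, star_zero]

lemma agr_empty_iff {P Q : Pt ιB ιA d} :
    Agr (∅ : Finset ιB) (∅ : Finset ιA) P Q ↔ P = Q := by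
  constructor
  · rintro ⟨h1, h2⟩
    exact Prod.ext (funext fun x => h1 x (Finset.notMem_empty _))
      (funext fun x => h2 x (Finset.notMem_empty _))
  · rintro rfl; exact agr_refl _ _ _

lemma OV_eq_iff {sB : Finset ιB} {sA : Finset ιA} {P Q R : Pt ιB ιA d}
    (h : Agr sB sA P Q) (hov : OV sB sA P R = OV sB sA Q R) : P = Q := by
  refine Prod.ext (funext fun x => ?_) (funext fun x => ?_)
  · by_cases hx : (x : ιB) ∈ sB
    · have := congrFun (congrArg Prod.fst hov) x
      simpa [OV, ov, hx] using this
    · exact h.1 x hx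
  · by_cases hx : (x : ιA) ∈ sA
    · have := congrFun (congrArg Prod.snd hov) x
      simpa [OV, ov, hx] using this
    · exact h.2 x hx

lemma EE_smul_one (hd : 1 ≤ d) (sB : Finset ιB) (sA : Finset ιA) (c : ℂ) :
    EE sB sA (c • (1 : Mat ιB ιA d)) = c • (1 : Mat ιB ιA d) := by
  funext P Q
  show (if Agr sB sA P Q then _ else 0) = c • (1 : Mat ιB ιA d) P Q
  by_cases hPQ : P = Q
  · subst hPQ
    rw [if_pos (agr_refl sB sA P)]
    have : ∀ R : Pt ιB ιA d,
        (c • (1 : Mat ιB ιA d)) (OV sB sA P R) (OV sB sA P R) = c := by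
      intro R
      simp [Matrix.smul_apply, Matrix.one_apply]
    rw [Fintype.sum_congr _ _ this]
    simp only [Finset.sum_const, Finset.card_univ, nsmul_eq_mul]
    have : kap ιB ιA d * ((Fintype.card (Pt ιB ιA d) : ℂ) * c) =
        (kap ιB ιA d * (Fintype.card (Pt ιB ιA d) : ℂ)) * c := by ring
    rw [this, kap_mul_card hd, one_mul]
    simp [Matrix.smul_apply, Matrix.one_apply]
  · by_cases h : Agr sB sA P Q
    · rw [if_pos h]
      have : ∀ R : Pt ιB ιA d,
          (c • (1 : Mat ιB ιA d)) (OV sB sA P R) (OV sB sA Q R) = 0 := by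
        intro R
        have hne : OV sB sA P R ≠ OV sB sA Q R := fun he => hPQ (OV_eq_iff h he)
        simp [Matrix.smul_apply, Matrix.one_apply, hne]
      rw [Fintype.sum_congr _ _ this, Finset.sum_const_zero, mul_zero]
      simp [Matrix.smul_apply, Matrix.one_apply, hPQ]
    · rw [if_neg h]
      simp [Matrix.smul_apply, Matrix.one_apply, hPQ]

lemma EE_empty (hd : 1 ≤ d) (M : Mat ιB ιA d) :
    EE (∅ : Finset ιB) (∅ : Finset ιA) M = (kap ιB ιA d * M.trace) • (1 : Mat ιB ιA d) := by
  funext P Q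
  show (if Agr ∅ ∅ P Q then _ else 0) = _
  by_cases hPQ : P = Q
  · subst hPQ
    rw [if_pos (agr_refl _ _ _)]
    have : ∀ R : Pt ιB ιA d, M (OV ∅ ∅ P R) (OV ∅ ∅ P R) = M R R := by
      intro R
      rw [show OV (∅ : Finset ιB) (∅ : Finset ιA) P R = R from
        Prod.ext (ov_empty P.1 R.1) (ov_empty P.2 R.2)]
    rw [Fintype.sum_congr _ _ this]
    simp [Matrix.smul_apply, Matrix.one_apply, Matrix.trace]
  · rw [if_neg (fun h => hPQ (agr_empty_iff.mp h))]
    simp [Matrix.smul_apply, Matrix.one_apply, hPQ]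

lemma card_aux {ι₀ : Type*} [Fintype ι₀] [DecidableEq ι₀] {t s : Finset ι₀} (h : t ⊆ s) :
    ((Finset.univ \ (s \ t)).card + (Finset.univ \ t).card : ℕ) =
      (Finset.univ : Finset ι₀).card + (Finset.univ \ s).card := by
  have h1 : (Finset.univ \ (s \ t)).card = (Finset.univ : Finset ι₀).card - (s \ t).card :=
    Finset.card_sdiff_of_subset (Finset.subset_univ _)
  have h2 := Finset.card_sdiff_of_subset (Finset.subset_univ t)
  have h3 := Finset.card_sdiff_of_subset (Finset.subset_univ s)
  have h4 := Finset.card_sdiff_of_subset h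
  have h5 : t.card ≤ s.card := Finset.card_le_card h
  have h6 : s.card ≤ Finset.univ.card := Finset.card_le_card (Finset.subset_univ _)
  have h7 : (s \ t).card ≤ Finset.univ.card := Finset.card_le_card (Finset.subset_univ _)
  omega

lemma kap_eq_pow : kap ιB ιA d =
    ((d : ℂ) ^ ((Finset.univ : Finset ιB).card + (Finset.univ : Finset ιA).card))⁻¹ := by
  rw [kap, card_pt]

lemma EE_emb (hd : 1 ≤ d) {sB tB : Finset ιB} {sA tA : Finset ιA}
    (hB : tB ⊆ sB) (hA : tA ⊆ sA)
    (X : Matrix (({x // x ∈ sB} → Fin d) × ({x // x ∈ sA} → Fin d))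
      (({x // x ∈ sB} → Fin d) × ({x // x ∈ sA} → Fin d)) ℂ) :
    EE tB tA (emb sB sA X) = emb tB tA (ptr2 sB tB sA tA X) := by
  have hd0 : (d : ℂ) ≠ 0 := Nat.cast_ne_zero.mpr (by omega)
  funext P Q
  show (if Agr tB tA P Q then _ else 0) = (if Agr tB tA P Q then _ else 0)
  by_cases h : Agr tB tA P Q
  swap
  · rw [if_neg h, if_neg h]
  rw [if_pos h, if_pos h]
  set G : ({x // x ∈ sB \ tB} → Fin d) → ({x // x ∈ sA \ tA} → Fin d) → ℂ :=
    fun b1 b2 => X ((mergeFn sB tB (res tB P.1) b1, mergeFn sA tA (res tA P.2) b2))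
      ((mergeFn sB tB (res tB Q.1) b1, mergeFn sA tA (res tA Q.2) b2)) with hG
  have stepA : ∀ R : Pt ιB ιA d,
      emb sB sA X (OV tB tA P R) (OV tB tA Q R) =
        cst d sB sA * G (res (sB \ tB) R.1) (res (sA \ tA) R.2) := by
    intro R
    have hagr : Agr sB sA (OV tB tA P R) (OV tB tA Q R) := by
      constructor
      · intro x hx
        have hxt : (x : ιB) ∉ tB := fun hm => hx (hB hm)
        simp [OV, ov, hxt]
      · intro x hx
        have hxt : (x : ιA) ∉ tA := fun hm => hx (hA hm)
        simp [OV, ov, hxt]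
    show (if Agr sB sA (OV tB tA P R) (OV tB tA Q R) then _ else 0) = _
    rw [if_pos hagr]
    have e1 := res_ov hB P.1 R.1
    have e2 := res_ov hA P.2 R.2
    have e3 := res_ov hB Q.1 R.1
    have e4 := res_ov hA Q.2 R.2
    show cst d sB sA * X (res sB (ov tB P.1 R.1), res sA (ov tA P.2 R.2))
        (res sB (ov tB Q.1 R.1), res sA (ov tA Q.2 R.2)) = _
    rw [e1, e2, e3, e4]
  rw [Fintype.sum_congr _ _ stepA, ← Finset.mul_sum]
  have eS : (∑ R : Pt ιB ιA d, G (res (sB \ tB) R.1) (res (sA \ tA) R.2)) =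
      (d : ℂ) ^ ((Finset.univ \ (sB \ tB) : Finset ιB).card) *
        ((d : ℂ) ^ ((Finset.univ \ (sA \ tA) : Finset ιA).card) *
          ∑ b1, ∑ b2, G b1 b2) := by
    rw [Fintype.sum_prod_type (f := fun R : Pt ιB ιA d =>
      G (res (sB \ tB) R.1) (res (sA \ tA) R.2))]
    have inner : ∀ R1 : Fn ιB d,
        (∑ R2 : Fn ιA d, G (res (sB \ tB) R1) (res (sA \ tA) R2)) =
          (d : ℂ) ^ ((Finset.univ \ (sA \ tA) : Finset ιA).card) *
            ∑ b2, G (res (sB \ tB) R1) b2 := fun R1 => sum_res _ _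
    rw [Fintype.sum_congr _ _ inner, ← Finset.mul_sum,
      sum_res (sB \ tB) (fun b1 => ∑ b2, G b1 b2)]
    ring
  rw [eS]
  have hptr : ptr2 sB tB sA tA X ((res tB P.1, res tA P.2)) ((res tB Q.1, res tA Q.2)) =
      ∑ b1, ∑ b2, G b1 b2 := rfl
  show _ = cst d tB tA * ptr2 sB tB sA tA X (res tB P.1, res tA P.2) (res tB Q.1, res tA Q.2)
  rw [hptr]
  have hconst : kap ιB ιA d * (cst d sB sA *
      ((d : ℂ) ^ ((Finset.univ \ (sB \ tB) : Finset ιB).card) *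
        ((d : ℂ) ^ ((Finset.univ \ (sA \ tA) : Finset ιA).card)))) = cst d tB tA := by
    rw [kap_eq_pow, cst, cst]
    have hpow : ∀ m : ℕ, (d : ℂ) ^ m ≠ 0 := fun m => pow_ne_zero m hd0
    field_simp
    rw [← pow_add, ← pow_add, ← pow_add]
    congr 1
    have c1 := card_aux (ι₀ := ιB) hB
    have c2 := card_aux (ι₀ := ιA) hA
    have cB : (Finset.univ : Finset ιB).card = Fintype.card ιB := Finset.card_univ
    have cA : (Finset.univ : Finset ιA).card = Fintype.card ιA := Finset.card_univ
    omega
  calc kap ιB ιA d * (cst d sB sA *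
      ((d : ℂ) ^ ((Finset.univ \ (sB \ tB) : Finset ιB).card) *
        ((d : ℂ) ^ ((Finset.univ \ (sA \ tA) : Finset ιA).card) * (∑ b1, ∑ b2, G b1 b2))))
      = (kap ιB ιA d * (cst d sB sA *
      ((d : ℂ) ^ ((Finset.univ \ (sB \ tB) : Finset ιB).card) *
        ((d : ℂ) ^ ((Finset.univ \ (sA \ tA) : Finset ιA).card))))) * (∑ b1, ∑ b2, G b1 b2) := by
        ring
    _ = cst d tB tA * (∑ b1, ∑ b2, G b1 b2) := by rw [hconst]

lemma mergeFn_self {ι₀ : Type*} [DecidableEq ι₀] (s : Finset ι₀) (f : {x // x ∈ s} → Fin d)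
    (h : {x // x ∈ s \ s} → Fin d) : mergeFn s s f h = f := by
  funext x
  rw [mergeFn, dif_pos x.2, Subtype.coe_eta]

lemma isEmpty_sdiff_self {ι₀ : Type*} [DecidableEq ι₀] (s : Finset ι₀) :
    IsEmpty {x // x ∈ s \ s} :=
  ⟨fun x => by simpa using x.2⟩

lemma ptr2_self (sB : Finset ιB) (sA : Finset ιA)
    (X : Matrix (({x // x ∈ sB} → Fin d) × ({x // x ∈ sA} → Fin d))
      (({x // x ∈ sB} → Fin d) × ({x // x ∈ sA} → Fin d)) ℂ) :
    ptr2 sB sB sA sA X = X := by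
  haveI := isEmpty_sdiff_self sB
  haveI := isEmpty_sdiff_self sA
  funext p q
  show (∑ hB : {x // x ∈ sB \ sB} → Fin d, ∑ hA : {x // x ∈ sA \ sA} → Fin d, _) = _
  rw [Fintype.sum_unique (fun hB : {x // x ∈ sB \ sB} → Fin d =>
    ∑ hA : {x // x ∈ sA \ sA} → Fin d,
      X (mergeFn sB sB p.1 hB, mergeFn sA sA p.2 hA)
        (mergeFn sB sB q.1 hB, mergeFn sA sA q.2 hA)),
    Fintype.sum_unique]
  rw [mergeFn_self sB p.1 default, mergeFn_self sA p.2 default,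
    mergeFn_self sB q.1 default, mergeFn_self sA q.2 default]

lemma conjTranspose_emb (sB : Finset ιB) (sA : Finset ιA)
    (X : Matrix (({x // x ∈ sB} → Fin d) × ({x // x ∈ sA} → Fin d))
      (({x // x ∈ sB} → Fin d) × ({x // x ∈ sA} → Fin d)) ℂ) :
    (emb sB sA X)ᴴ = emb sB sA Xᴴ := by
  funext P Q
  rw [Matrix.conjTranspose_apply]
  show star (if Agr sB sA Q P then _ else 0) = (if Agr sB sA P Q then _ else 0)
  by_cases h : Agr sB sA P Q
  · rw [if_pos (agr_symm.mp h), if_pos h]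
    simp [Matrix.conjTranspose_apply, star_mul', star_cst, mul_comm]
  · rw [if_neg (fun hqp => h (agr_symm.mpr hqp)), if_neg h, star_zero]

lemma trace_emb (hd : 1 ≤ d) (sB : Finset ιB) (sA : Finset ιA)
    (X : Matrix (({x // x ∈ sB} → Fin d) × ({x // x ∈ sA} → Fin d))
      (({x // x ∈ sB} → Fin d) × ({x // x ∈ sA} → Fin d)) ℂ) :
    (emb sB sA X).trace = X.trace := by
  have hd0 : (d : ℂ) ≠ 0 := Nat.cast_ne_zero.mpr (by omega)
  rw [Matrix.trace, Matrix.trace]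
  have h1 : ∀ P : Pt ιB ιA d, (emb sB sA X).diag P =
      cst d sB sA * X (res sB P.1, res sA P.2) (res sB P.1, res sA P.2) := by
    intro P
    show (if Agr sB sA P P then _ else 0) = _
    rw [if_pos (agr_refl _ _ _)]
  rw [Fintype.sum_congr _ _ h1, ← Finset.mul_sum]
  rw [Fintype.sum_prod_type (f := fun P : Pt ιB ιA d =>
    X (res sB P.1, res sA P.2) (res sB P.1, res sA P.2))]
  have h2 : ∀ P1 : Fn ιB d,
      (∑ P2 : Fn ιA d, X (res sB P1, res sA P2) (res sB P1, res sA P2)) =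
        (d : ℂ) ^ ((Finset.univ \ sA : Finset ιA).card) *
          ∑ b2, X (res sB P1, b2) (res sB P1, b2) :=
    fun P1 => sum_res sA (fun b2 => X (res sB P1, b2) (res sB P1, b2))
  rw [Fintype.sum_congr _ _ h2, ← Finset.mul_sum,
    sum_res sB (fun b1 => ∑ b2, X (b1, b2) (b1, b2))]
  have h3 : (∑ z : ({x // x ∈ sB} → Fin d) × ({x // x ∈ sA} → Fin d), X.diag z) =
      ∑ b1, ∑ b2, X (b1, b2) (b1, b2) :=
    Fintype.sum_prod_type (f := fun z => X z z)
  rw [h3]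
  rw [cst]
  field_simp
  rw [pow_add]
  ring

lemma emb_smul_one (sB : Finset ιB) (sA : Finset ιA) (c : ℂ) :
    emb sB sA (c • (1 : Matrix (({x // x ∈ sB} → Fin d) × ({x // x ∈ sA} → Fin d))
      (({x // x ∈ sB} → Fin d) × ({x // x ∈ sA} → Fin d)) ℂ)) =
      (cst d sB sA * c) • (1 : Mat ιB ιA d) := by
  funext P Q
  show (if Agr sB sA P Q then _ else 0) = ((cst d sB sA * c) • (1 : Mat ιB ιA d)) P Q
  by_cases hPQ : P = Q
  · subst hPQ
    rw [if_pos (agr_refl _ _ _)]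
    simp [Matrix.smul_apply, Matrix.one_apply, mul_assoc]
  · by_cases h : Agr sB sA P Q
    · rw [if_pos h]
      have hne : (res sB P.1, res sA P.2) ≠ (res sB Q.1, res sA Q.2) := by
        intro he
        apply hPQ
        refine Prod.ext (funext fun x => ?_) (funext fun x => ?_)
        · by_cases hx : (x : ιB) ∈ sB
          · exact congrFun (congrArg Prod.fst he) ⟨x, hx⟩
          · exact h.1 x hx
        · by_cases hx : (x : ιA) ∈ sA
          · exact congrFun (congrArg Prod.snd he) ⟨x, hx⟩
          · exact h.2 x hx
      simp [Matrix.smul_apply, Matrix.one_apply, hne, hPQ]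
    · rw [if_neg h]
      simp [Matrix.smul_apply, Matrix.one_apply, hPQ]

def esdiff (sB : Finset ιB) : ({x // x ∈ sB \ (∅ : Finset ιB)} → Fin d) ≃
    ({x // x ∈ sB} → Fin d) where
  toFun h := fun x => h ⟨x, by simpa using x.2⟩
  invFun g := fun x => g ⟨x, by simpa using x.2⟩
  left_inv h := rfl
  right_inv g := rfl

lemma ptr2_empty_trOut (sB : Finset ιB) (sA : Finset ιA)
    (X : Matrix (({x // x ∈ sB} → Fin d) × ({x // x ∈ sA} → Fin d))
      (({x // x ∈ sB} → Fin d) × ({x // x ∈ sA} → Fin d)) ℂ)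
    (p q : ({x // x ∈ (∅ : Finset ιB)} → Fin d) × ({x // x ∈ sA} → Fin d)) :
    ptr2 sB (∅ : Finset ιB) sA sA X p q = trOut sB sA X p.2 q.2 := by
  haveI := isEmpty_sdiff_self sA
  show (∑ hB : {x // x ∈ sB \ (∅ : Finset ιB)} → Fin d,
      ∑ hA : {x // x ∈ sA \ sA} → Fin d, _) = _
  have h1 : ∀ hB : {x // x ∈ sB \ (∅ : Finset ιB)} → Fin d,
      (∑ hA : {x // x ∈ sA \ sA} → Fin d,
        X (mergeFn sB ∅ p.1 hB, mergeFn sA sA p.2 hA)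
          (mergeFn sB ∅ q.1 hB, mergeFn sA sA q.2 hA)) =
        X (esdiff sB hB, p.2) (esdiff sB hB, q.2) := by
    intro hB
    rw [Fintype.sum_unique]
    rw [mergeFn_self, mergeFn_self]
    congr 1 <;> · show Prod.mk _ _ = _
                  congr 1
                  funext x
                  rw [mergeFn, dif_neg (Finset.notMem_empty _)]
                  rfl
  rw [Fintype.sum_congr _ _ h1]
  exact Equiv.sum_comp (esdiff sB) (fun b => X (b, p.2) (b, q.2))

lemma ptr2_from_EE (hd : 1 ≤ d) {tB : Finset ιB} {tA : Finset ιA} {M : Mat ιB ιA d}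
    {Y : Matrix (({x // x ∈ tB} → Fin d) × ({x // x ∈ tA} → Fin d))
      (({x // x ∈ tB} → Fin d) × ({x // x ∈ tA} → Fin d)) ℂ}
    (hE : EE tB tA M = emb tB tA Y) :
    ptr2 Finset.univ tB Finset.univ tA M = Y := by
  have hd0 : (d : ℂ) ≠ 0 := Nat.cast_ne_zero.mpr (by omega)
  funext p q
  set h0B : {x // x ∈ (Finset.univ : Finset ιB) \ tB} → Fin d := fun _ => ⟨0, hd⟩ with hh0B
  set h0A : {x // x ∈ (Finset.univ : Finset ιA) \ tA} → Fin d := fun _ => ⟨0, hd⟩ with hh0A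
  set P : Pt ιB ιA d := (mergeFn Finset.univ tB p.1 h0B, mergeFn Finset.univ tA p.2 h0A) with hP
  set Q : Pt ιB ιA d := (mergeFn Finset.univ tB q.1 h0B, mergeFn Finset.univ tA q.2 h0A) with hQ
  have hAgr : Agr tB tA P Q := by
    constructor
    · intro x hx
      show mergeFn Finset.univ tB p.1 h0B x = mergeFn Finset.univ tB q.1 h0B x
      rw [mergeFn, mergeFn, dif_neg hx, dif_neg hx]
    · intro x hx
      show mergeFn Finset.univ tA p.2 h0A x = mergeFn Finset.univ tA q.2 h0A x
      rw [mergeFn, mergeFn, dif_neg hx, dif_neg hx]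
  have h1 := congrFun (congrFun hE P) Q
  have hL : EE tB tA M P Q = kap ιB ιA d *
      ∑ R : Pt ιB ιA d, M (mergeFn Finset.univ tB p.1 (res (Finset.univ \ tB) R.1),
          mergeFn Finset.univ tA p.2 (res (Finset.univ \ tA) R.2))
        (mergeFn Finset.univ tB q.1 (res (Finset.univ \ tB) R.1),
          mergeFn Finset.univ tA q.2 (res (Finset.univ \ tA) R.2)) := by
    show (if Agr tB tA P Q then _ else 0) = _
    rw [if_pos hAgr]
    congr 1
    apply Finset.sum_congr rfl
    intro R _
    have eB : ∀ (u : ({x // x ∈ tB} → Fin d)) (hu : {x // x ∈ (Finset.univ : Finset ιB) \ tB} → Fin d),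
        ov tB (mergeFn Finset.univ tB u hu) R.1 =
          mergeFn Finset.univ tB u (res (Finset.univ \ tB) R.1) := by
      intro u hu
      funext x
      by_cases hx : (x : ιB) ∈ tB
      · rw [ov]
        rw [if_pos hx]
        rw [mergeFn, mergeFn, dif_pos hx, dif_pos hx]
      · rw [ov]
        rw [if_neg hx]
        rw [mergeFn, dif_neg hx]
        rw [res, Subtype.coe_eta]
    have eA : ∀ (u : ({x // x ∈ tA} → Fin d)) (hu : {x // x ∈ (Finset.univ : Finset ιA) \ tA} → Fin d),
        ov tA (mergeFn Finset.univ tA u hu) R.2 =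
          mergeFn Finset.univ tA u (res (Finset.univ \ tA) R.2) := by
      intro u hu
      funext x
      by_cases hx : (x : ιA) ∈ tA
      · rw [ov]
        rw [if_pos hx]
        rw [mergeFn, mergeFn, dif_pos hx, dif_pos hx]
      · rw [ov]
        rw [if_neg hx]
        rw [mergeFn, dif_neg hx]
        rw [res, Subtype.coe_eta]
    show M (ov tB P.1 R.1, ov tA P.2 R.2) (ov tB Q.1 R.1, ov tA Q.2 R.2) = _
    rw [hP, hQ]
    rw [eB p.1 h0B, eA p.2 h0A, eB q.1 h0B, eA q.2 h0A]
  have hR : emb tB tA Y P Q = cst d tB tA * Y p q := by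
    show (if Agr tB tA P Q then _ else 0) = _
    rw [if_pos hAgr]
    rw [hP, hQ]
    show cst d tB tA * Y (res tB (mergeFn Finset.univ tB p.1 h0B),
        res tA (mergeFn Finset.univ tA p.2 h0A))
      (res tB (mergeFn Finset.univ tB q.1 h0B),
        res tA (mergeFn Finset.univ tA q.2 h0A)) = _
    rw [res_mergeFn, res_mergeFn, res_mergeFn, res_mergeFn]
  rw [hL, hR] at h1
  set G2 : ({x // x ∈ (Finset.univ : Finset ιB) \ tB} → Fin d) →
      ({x // x ∈ (Finset.univ : Finset ιA) \ tA} → Fin d) → ℂ :=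
    fun b1 b2 => M ((mergeFn Finset.univ tB p.1 b1, mergeFn Finset.univ tA p.2 b2))
      ((mergeFn Finset.univ tB q.1 b1, mergeFn Finset.univ tA q.2 b2)) with hG2
  have eS : (∑ R : Pt ιB ιA d, G2 (res (Finset.univ \ tB) R.1) (res (Finset.univ \ tA) R.2)) =
      (d : ℂ) ^ ((Finset.univ \ (Finset.univ \ tB) : Finset ιB).card) *
        ((d : ℂ) ^ ((Finset.univ \ (Finset.univ \ tA) : Finset ιA).card) *
          ∑ b1, ∑ b2, G2 b1 b2) := by
    rw [Fintype.sum_prod_type (f := fun R : Pt ιB ιA d =>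
      G2 (res (Finset.univ \ tB) R.1) (res (Finset.univ \ tA) R.2))]
    have inner : ∀ R1 : Fn ιB d,
        (∑ R2 : Fn ιA d, G2 (res (Finset.univ \ tB) R1) (res (Finset.univ \ tA) R2)) =
          (d : ℂ) ^ ((Finset.univ \ (Finset.univ \ tA) : Finset ιA).card) *
            ∑ b2, G2 (res (Finset.univ \ tB) R1) b2 := fun R1 => sum_res _ _
    rw [Fintype.sum_congr _ _ inner, ← Finset.mul_sum,
      sum_res (Finset.univ \ tB) (fun b1 => ∑ b2, G2 b1 b2)]
    ring
  rw [eS] at h1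
  have hZ : (∑ b1, ∑ b2, G2 b1 b2) = ptr2 Finset.univ tB Finset.univ tA M p q := rfl
  rw [hZ] at h1
  have hconst : kap ιB ιA d *
      ((d : ℂ) ^ ((Finset.univ \ (Finset.univ \ tB) : Finset ιB).card) *
        (d : ℂ) ^ ((Finset.univ \ (Finset.univ \ tA) : Finset ιA).card)) = cst d tB tA := by
    rw [kap_eq_pow, cst]
    have e1 : (Finset.univ \ (Finset.univ \ tB) : Finset ιB) = tB := by
      rw [Finset.sdiff_sdiff_self_left, Finset.univ_inter]
    have e2 : (Finset.univ \ (Finset.univ \ tA) : Finset ιA) = tA := by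
      rw [Finset.sdiff_sdiff_self_left, Finset.univ_inter]
    rw [e1, e2]
    have c1 := Finset.card_sdiff_of_subset (Finset.subset_univ tB)
    have c2 := Finset.card_sdiff_of_subset (Finset.subset_univ tA)
    have c3 := Finset.card_le_card (Finset.subset_univ tB)
    have c4 := Finset.card_le_card (Finset.subset_univ tA)
    have cB : (Finset.univ : Finset ιB).card = Fintype.card ιB := Finset.card_univ
    have cA : (Finset.univ : Finset ιA).card = Fintype.card ιA := Finset.card_univ
    field_simp
    rw [← pow_add, ← pow_add]
    congr 1
    omega
  have hcne : cst d tB tA ≠ 0 := by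
    rw [cst]; exact inv_ne_zero (pow_ne_zero _ hd0)
  apply mul_left_cancel₀ hcne
  rw [← hconst]
  calc kap ιB ιA d *
      ((d : ℂ) ^ ((Finset.univ \ (Finset.univ \ tB) : Finset ιB).card) *
        (d : ℂ) ^ ((Finset.univ \ (Finset.univ \ tA) : Finset ιA).card)) *
        ptr2 Finset.univ tB Finset.univ tA M p q
      = kap ιB ιA d *
      ((d : ℂ) ^ ((Finset.univ \ (Finset.univ \ tB) : Finset ιB).card) *
        ((d : ℂ) ^ ((Finset.univ \ (Finset.univ \ tA) : Finset ιA).card) *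
          ptr2 Finset.univ tB Finset.univ tA M p q)) := by ring
    _ = cst d tB tA * Y p q := h1
    _ = kap ιB ιA d *
      ((d : ℂ) ^ ((Finset.univ \ (Finset.univ \ tB) : Finset ιB).card) *
        (d : ℂ) ^ ((Finset.univ \ (Finset.univ \ tA) : Finset ιA).card)) * Y p q := by
        rw [hconst]

lemma neg_one_sum {ι₀ : Type*} [DecidableEq ι₀] (S : Finset ι₀) :
    (∑ V ∈ S.powerset, ((-1 : ℂ)) ^ V.card) = if S = ∅ then 1 else 0 := by
  have h := Finset.sum_powerset_neg_one_pow_card (x := S)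
  have := congrArg (fun z : ℤ => (z : ℂ)) h
  push_cast at this
  simpa using this

lemma count_lemma {ι₀ : Type*} [DecidableEq ι₀] {W S : Finset ι₀} (hWS : W ⊆ S) :
    (∑ T ∈ S.powerset.filter (fun T => W ⊆ T), ((-1 : ℂ)) ^ ((T \ W).card))
      = if W = S then 1 else 0 := by
  rw [Finset.sum_nbij' (i := fun T => T \ W) (j := fun V => W ∪ V)
    (t := (S \ W).powerset) (g := fun V => ((-1 : ℂ)) ^ V.card)]
  · rw [neg_one_sum]
    congr 1
    simp only [eq_iff_iff, Finset.sdiff_eq_empty_iff_subset]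
    constructor
    · exact fun h => le_antisymm hWS h
    · exact fun h => h ▸ le_refl _
  · intro T hT
    simp only [Finset.mem_filter, Finset.mem_powerset] at hT
    exact Finset.mem_powerset.mpr (Finset.sdiff_subset_sdiff hT.1 (le_refl _))
  · intro V hV
    simp only [Finset.mem_powerset] at hV
    simp only [Finset.mem_filter, Finset.mem_powerset]
    exact ⟨Finset.union_subset hWS (hV.trans (Finset.sdiff_subset)), Finset.subset_union_left⟩
  · intro T hT
    simp only [Finset.mem_filter, Finset.mem_powerset] at hT
    exact Finset.union_sdiff_of_subset hT.2
  · intro V hV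
    simp only [Finset.mem_powerset] at hV
    exact Finset.union_sdiff_cancel_left
      (Finset.disjoint_of_subset_right hV Finset.disjoint_sdiff)
  · intro T _; rfl

lemma mob {ι₀ : Type*} [DecidableEq ι₀] {β : Type*} [AddCommMonoid β] [Module ℂ β]
    (S : Finset ι₀) (g : Finset ι₀ → β) :
    (∑ T ∈ S.powerset, ∑ W ∈ T.powerset, ((-1 : ℂ)) ^ ((T \ W).card) • g W)
      = g S := by
  have step1 : ∀ T ∈ S.powerset,
      (∑ W ∈ T.powerset, ((-1 : ℂ)) ^ ((T \ W).card) • g W)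
        = ∑ W ∈ S.powerset, if W ⊆ T then ((-1 : ℂ)) ^ ((T \ W).card) • g W else 0 := by
    intro T hT
    simp only [Finset.mem_powerset] at hT
    rw [Finset.sum_ite, Finset.sum_const_zero, add_zero]
    apply Finset.sum_congr _ (fun _ _ => rfl)
    ext W
    simp only [Finset.mem_filter, Finset.mem_powerset]
    exact ⟨fun h => ⟨h.trans hT, h⟩, fun h => h.2⟩
  rw [Finset.sum_congr rfl step1, Finset.sum_comm]
  have step2 : ∀ W ∈ S.powerset,
      (∑ T ∈ S.powerset, if W ⊆ T then ((-1 : ℂ)) ^ ((T \ W).card) • g W else 0)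
        = (if W = S then (1 : ℂ) else 0) • g W := by
    intro W hW
    rw [Finset.sum_ite, Finset.sum_const_zero, add_zero, ← Finset.sum_smul,
      count_lemma (Finset.mem_powerset.mp hW)]
  rw [Finset.sum_congr rfl step2]
  simp only [ite_smul, one_smul, zero_smul]
  rw [Finset.sum_ite_eq' S.powerset S g, if_pos (Finset.mem_powerset_self S)]

lemma msum {ι₀ : Type*} [DecidableEq ι₀] (T : Finset ι₀) :
    (∑ W ∈ T.powerset, ((-1 : ℂ)) ^ ((T \ W).card)) = if T = ∅ then 1 else 0 := by
  rw [Finset.sum_nbij' (i := fun W => T \ W) (j := fun V => T \ V)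
    (t := T.powerset) (g := fun V => ((-1 : ℂ)) ^ V.card)]
  · exact neg_one_sum T
  · intro W _; exact Finset.mem_powerset.mpr (Finset.sdiff_subset)
  · intro V _; exact Finset.mem_powerset.mpr (Finset.sdiff_subset)
  · intro W hW
    rw [Finset.sdiff_sdiff_self_left, Finset.inter_eq_right.mpr (Finset.mem_powerset.mp hW)]
  · intro V hV
    rw [Finset.sdiff_sdiff_self_left, Finset.inter_eq_right.mpr (Finset.mem_powerset.mp hV)]
  · intro W _; rfl

def toggle {ι₀ : Type*} [DecidableEq ι₀] (v : ι₀) (W : Finset ι₀) : Finset ι₀ :=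
  if v ∈ W then W.erase v else insert v W

lemma inter_toggle {ι₀ : Type*} [DecidableEq ι₀] {s : Finset ι₀} {v : ι₀}
    (hv : v ∉ s) (W : Finset ι₀) : s ∩ toggle v W = s ∩ W := by
  rw [toggle]
  split
  · ext y
    simp only [Finset.mem_inter, Finset.mem_erase]
    constructor
    · rintro ⟨hs, _, hw⟩; exact ⟨hs, hw⟩
    · rintro ⟨hs, hw⟩; exact ⟨hs, fun he => hv (he ▸ hs), hw⟩
  · ext y
    simp only [Finset.mem_inter, Finset.mem_insert]
    constructor
    · rintro ⟨hs, h | hw⟩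
      · exact absurd (h ▸ hs) hv
      · exact ⟨hs, hw⟩
    · rintro ⟨hs, hw⟩; exact ⟨hs, Or.inr hw⟩

lemma toggle_mem {ι₀ : Type*} [DecidableEq ι₀] {T W : Finset ι₀} {v : ι₀}
    (hvT : v ∈ T) (hW : W ⊆ T) : toggle v W ⊆ T := by
  rw [toggle]
  split
  · exact (Finset.erase_subset _ _).trans hW
  · exact Finset.insert_subset hvT hW

lemma toggle_ne {ι₀ : Type*} [DecidableEq ι₀] (v : ι₀) (W : Finset ι₀) :
    toggle v W ≠ W := by
  by_cases h : v ∈ W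
  · rw [toggle, if_pos h]
    intro he
    exact Finset.notMem_erase v W (he.symm ▸ h)
  · rw [toggle, if_neg h]
    intro he
    exact h (he ▸ Finset.mem_insert_self v W)

lemma toggle_toggle {ι₀ : Type*} [DecidableEq ι₀] (v : ι₀) (W : Finset ι₀) :
    toggle v (toggle v W) = W := by
  by_cases h : v ∈ W
  · rw [show toggle v W = W.erase v from by rw [toggle, if_pos h]]
    rw [toggle, if_neg (Finset.notMem_erase v W), Finset.insert_erase h]
  · rw [show toggle v W = insert v W from by rw [toggle, if_neg h]]
    rw [toggle, if_pos (Finset.mem_insert_self v W), Finset.erase_insert h]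

lemma sign_toggle {ι₀ : Type*} [DecidableEq ι₀] {T W : Finset ι₀} {v : ι₀}
    (hvT : v ∈ T) (hW : W ⊆ T) :
    ((-1 : ℂ)) ^ ((T \ toggle v W).card) = -((-1 : ℂ)) ^ ((T \ W).card) := by
  by_cases h : v ∈ W
  · have he : T \ toggle v W = insert v (T \ W) := by
      rw [toggle, if_pos h]
      ext z
      simp only [Finset.mem_sdiff, Finset.mem_erase, Finset.mem_insert, not_and, not_not]
      by_cases hzv : z = v
      · subst hzv; simp [hvT, h]
      · simp only [hzv]; tauto
    have hv' : v ∉ T \ W := fun hc => (Finset.mem_sdiff.mp hc).2 h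
    rw [he, Finset.card_insert_of_notMem hv', pow_succ]
    ring
  · have he : T \ toggle v W = (T \ W).erase v := by
      rw [toggle, if_neg h]
      ext z
      simp only [Finset.mem_sdiff, Finset.mem_insert, Finset.mem_erase, not_or]
      tauto
    have hv' : v ∈ T \ W := Finset.mem_sdiff.mpr ⟨hvT, h⟩
    have hc : (T \ W).card = ((T \ W).erase v).card + 1 :=
      (Finset.card_erase_add_one hv').symm
    have h1 : ((-1 : ℂ)) ^ ((T \ W).card) = -((-1 : ℂ)) ^ (((T \ W).erase v).card) := by
      rw [hc, pow_succ]; ring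
    rw [he, h1, neg_neg]

lemma sum_toggle_zero {ι₀ : Type*} [DecidableEq ι₀] {β : Type*} [AddCommGroup β]
    [Module ℂ β] {T s : Finset ι₀} (hns : ¬ T ⊆ s) (F : Finset ι₀ → β) :
    (∑ W ∈ T.powerset, ((-1 : ℂ)) ^ ((T \ W).card) • F (s ∩ W)) = 0 := by
  obtain ⟨v, hvT, hvs⟩ := Finset.not_subset.mp hns
  refine Finset.sum_involution (fun W _ => toggle v W) ?_ ?_ ?_ ?_
  · intro W hW
    rw [sign_toggle hvT (Finset.mem_powerset.mp hW), inter_toggle hvs, neg_smul]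
    exact add_neg_cancel _
  · intro W _ _
    exact toggle_ne v W
  · intro W hW
    exact Finset.mem_powerset.mpr (toggle_mem hvT (Finset.mem_powerset.mp hW))
  · intro W _
    exact toggle_toggle v W

lemma CC_decomp (sB : Finset ιB) (sA : Finset ιA) (M : Mat ιB ιA d) :
    (∑ TB ∈ sB.powerset, ∑ TA ∈ sA.powerset, CC TB TA M) = EE sB sA M := by
  have h1 : ∀ TB ∈ sB.powerset,
      (∑ TA ∈ sA.powerset, CC TB TA M) =
        ∑ WB ∈ TB.powerset, ((-1 : ℂ)) ^ ((TB \ WB).card) • EE WB sA M := by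
    intro TB _
    show (∑ TA ∈ sA.powerset, ∑ WB ∈ TB.powerset, ∑ WA ∈ TA.powerset,
      (((-1 : ℂ)) ^ ((TB \ WB).card) * ((-1 : ℂ)) ^ ((TA \ WA).card)) • EE WB WA M) = _
    rw [Finset.sum_comm]
    apply Finset.sum_congr rfl
    intro WB _
    have e2 : ∀ TA ∈ sA.powerset,
        (∑ WA ∈ TA.powerset,
          (((-1 : ℂ)) ^ ((TB \ WB).card) * ((-1 : ℂ)) ^ ((TA \ WA).card)) • EE WB WA M) =
          ((-1 : ℂ)) ^ ((TB \ WB).card) •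
            ∑ WA ∈ TA.powerset, ((-1 : ℂ)) ^ ((TA \ WA).card) • EE WB WA M := by
      intro TA _
      rw [Finset.smul_sum]
      apply Finset.sum_congr rfl
      intro WA _
      rw [mul_smul]
    rw [Finset.sum_congr rfl e2, ← Finset.smul_sum]
    congr 1
    exact mob sA (fun WA => EE WB WA M)
  rw [Finset.sum_congr rfl h1]
  exact mob sB (fun WB => EE WB sA M)

lemma EE_CC (hd : 1 ≤ d) (sB TB : Finset ιB) (sA TA : Finset ιA) (M : Mat ιB ιA d) :
    EE sB sA (CC TB TA M) = if TB ⊆ sB ∧ TA ⊆ sA then CC TB TA M else 0 := by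
  have expand : EE sB sA (CC TB TA M) =
      ∑ WB ∈ TB.powerset, ∑ WA ∈ TA.powerset,
        (((-1 : ℂ)) ^ ((TB \ WB).card) * ((-1 : ℂ)) ^ ((TA \ WA).card)) •
          EE (sB ∩ WB) (sA ∩ WA) M := by
    rw [CC, EE_sum]
    apply Finset.sum_congr rfl
    intro WB _
    rw [EE_sum]
    apply Finset.sum_congr rfl
    intro WA _
    rw [EE_smul, EE_comp hd]
  rw [expand]
  by_cases hB' : TB ⊆ sB
  · by_cases hA' : TA ⊆ sA
    · rw [if_pos ⟨hB', hA'⟩, CC]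
      apply Finset.sum_congr rfl
      intro WB hWB
      apply Finset.sum_congr rfl
      intro WA hWA
      rw [Finset.inter_eq_right.mpr ((Finset.mem_powerset.mp hWB).trans hB'),
        Finset.inter_eq_right.mpr ((Finset.mem_powerset.mp hWA).trans hA')]
    · rw [if_neg (fun hc => hA' hc.2)]
      have hz : ∀ WB ∈ TB.powerset,
          (∑ WA ∈ TA.powerset,
            (((-1 : ℂ)) ^ ((TB \ WB).card) * ((-1 : ℂ)) ^ ((TA \ WA).card)) •
              EE (sB ∩ WB) (sA ∩ WA) M) = 0 := by
        intro WB _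
        have e2 : ∀ WA ∈ TA.powerset,
            (((-1 : ℂ)) ^ ((TB \ WB).card) * ((-1 : ℂ)) ^ ((TA \ WA).card)) •
              EE (sB ∩ WB) (sA ∩ WA) M =
            ((-1 : ℂ)) ^ ((TA \ WA).card) •
              (((-1 : ℂ)) ^ ((TB \ WB).card) • EE (sB ∩ WB) (sA ∩ WA) M) := by
          intro WA _
          rw [mul_comm, mul_smul]
        rw [Finset.sum_congr rfl e2]
        exact sum_toggle_zero hA'
          (fun U => ((-1 : ℂ)) ^ ((TB \ WB).card) • EE (sB ∩ WB) U M)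
      rw [Finset.sum_congr rfl hz, Finset.sum_const_zero]
  · rw [if_neg (fun hc => hB' hc.1)]
    have e2 : ∀ WB ∈ TB.powerset,
        (∑ WA ∈ TA.powerset,
          (((-1 : ℂ)) ^ ((TB \ WB).card) * ((-1 : ℂ)) ^ ((TA \ WA).card)) •
            EE (sB ∩ WB) (sA ∩ WA) M) =
          ((-1 : ℂ)) ^ ((TB \ WB).card) •
            ∑ WA ∈ TA.powerset, ((-1 : ℂ)) ^ ((TA \ WA).card) •
              EE (sB ∩ WB) (sA ∩ WA) M := by
      intro WB _
      rw [Finset.smul_sum]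
      apply Finset.sum_congr rfl
      intro WA _
      rw [mul_smul]
    rw [Finset.sum_congr rfl e2]
    exact sum_toggle_zero hB'
      (fun U => ∑ WA ∈ TA.powerset, ((-1 : ℂ)) ^ ((TA \ WA).card) • EE U (sA ∩ WA) M)

lemma CC_of_EE (hd : 1 ≤ d) {sB TB : Finset ιB} {sA TA : Finset ιA}
    (hB' : TB ⊆ sB) (hA' : TA ⊆ sA) (M : Mat ιB ιA d) :
    CC TB TA (EE sB sA M) = CC TB TA M := by
  rw [CC, CC]
  apply Finset.sum_congr rfl
  intro WB hWB
  apply Finset.sum_congr rfl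
  intro WA hWA
  rw [EE_comp hd,
    Finset.inter_eq_left.mpr ((Finset.mem_powerset.mp hWB).trans hB'),
    Finset.inter_eq_left.mpr ((Finset.mem_powerset.mp hWA).trans hA')]

lemma CC_empty (M : Mat ιB ιA d) :
    CC (∅ : Finset ιB) (∅ : Finset ιA) M = EE ∅ ∅ M := by
  simp [CC, Finset.powerset_empty]

lemma trace_CC (hd : 1 ≤ d) (TB : Finset ιB) (TA : Finset ιA) (M : Mat ιB ιA d) :
    (CC TB TA M).trace =
      ((if TB = ∅ then (1 : ℂ) else 0) * (if TA = ∅ then (1 : ℂ) else 0)) * M.trace := by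
  rw [CC, Matrix.trace_sum]
  have h1 : ∀ WB ∈ TB.powerset,
      (∑ WA ∈ TA.powerset,
        (((-1 : ℂ)) ^ ((TB \ WB).card) * ((-1 : ℂ)) ^ ((TA \ WA).card)) •
          EE WB WA M).trace =
        ((-1 : ℂ)) ^ ((TB \ WB).card) *
          ((∑ WA ∈ TA.powerset, ((-1 : ℂ)) ^ ((TA \ WA).card)) * M.trace) := by
    intro WB _
    rw [Matrix.trace_sum]
    have h2 : ∀ WA ∈ TA.powerset,
        ((((-1 : ℂ)) ^ ((TB \ WB).card) * ((-1 : ℂ)) ^ ((TA \ WA).card)) •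
          EE WB WA M).trace =
          ((-1 : ℂ)) ^ ((TB \ WB).card) *
            (((-1 : ℂ)) ^ ((TA \ WA).card) * M.trace) := by
      intro WA _
      rw [Matrix.trace_smul, trace_EE hd, smul_eq_mul, mul_assoc]
    rw [Finset.sum_congr rfl h2, ← Finset.mul_sum, Finset.sum_mul]
  rw [Finset.sum_congr rfl h1, ← Finset.sum_mul, msum, msum, mul_assoc]

lemma conjTranspose_CC (TB : Finset ιB) (TA : Finset ιA) (M : Mat ιB ιA d) :
    (CC TB TA M)ᴴ = CC TB TA Mᴴ := by
  rw [CC, Matrix.conjTranspose_sum]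
  apply Finset.sum_congr rfl
  intro WB _
  rw [Matrix.conjTranspose_sum]
  apply Finset.sum_congr rfl
  intro WA _
  rw [Matrix.conjTranspose_smul, conjTranspose_EE]
  congr 1
  simp [star_mul']

lemma CC_smul_one_zero (hd : 1 ≤ d) {TB : Finset ιB} {TA : Finset ιA}
    (h : ¬ (TB = ∅ ∧ TA = ∅)) (c : ℂ) :
    CC TB TA (c • (1 : Mat ιB ιA d)) = 0 := by
  rw [CC]
  have h1 : ∀ WB ∈ TB.powerset,
      (∑ WA ∈ TA.powerset,
        (((-1 : ℂ)) ^ ((TB \ WB).card) * ((-1 : ℂ)) ^ ((TA \ WA).card)) •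
          EE WB WA (c • (1 : Mat ιB ιA d))) =
        (((-1 : ℂ)) ^ ((TB \ WB).card) *
          ∑ WA ∈ TA.powerset, ((-1 : ℂ)) ^ ((TA \ WA).card)) • (c • (1 : Mat ιB ιA d)) := by
    intro WB _
    rw [Finset.mul_sum, Finset.sum_smul]
    apply Finset.sum_congr rfl
    intro WA _
    rw [EE_smul_one hd]
  rw [Finset.sum_congr rfl h1]
  rw [msum]
  by_cases hTA : TA = ∅
  · have hTB : TB ≠ ∅ := fun he => h ⟨he, hTA⟩
    rw [if_pos hTA]
    have h2 : ∀ WB ∈ TB.powerset,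
        (((-1 : ℂ)) ^ ((TB \ WB).card) * 1) • (c • (1 : Mat ιB ιA d)) =
          ((-1 : ℂ)) ^ ((TB \ WB).card) • (c • (1 : Mat ιB ιA d)) := by
      intro WB _
      rw [mul_one]
    rw [Finset.sum_congr rfl h2, ← Finset.sum_smul, msum, if_neg hTB, zero_smul]
  · rw [if_neg hTA]
    have h2 : ∀ WB ∈ TB.powerset,
        (((-1 : ℂ)) ^ ((TB \ WB).card) * 0) • (c • (1 : Mat ιB ιA d)) = 0 := by
      intro WB _
      rw [mul_zero, zero_smul]
    rw [Finset.sum_congr rfl h2, Finset.sum_const_zero]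

lemma kap_ne_zero (hd : 1 ≤ d) : kap ιB ιA d ≠ (0 : ℂ) := by
  rw [kap]
  exact inv_ne_zero (card_pt_ne_zero hd)

lemma trOut_of_EE (hd : 1 ≤ d) {M : Mat ιB ιA d}
    (hE : EE (∅ : Finset ιB) (Finset.univ : Finset ιA) M =
      kap ιB ιA d • (1 : Mat ιB ιA d)) :
    trOut (Finset.univ : Finset ιB) (Finset.univ : Finset ιA) M =
      (1 / (d : ℂ) ^ ((Finset.univ : Finset ιA).card)) • 1 := by
  have hd0 : (d : ℂ) ≠ 0 := Nat.cast_ne_zero.mpr (by omega)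
  funext f g
  set b : Fn ιB d := fun _ => ⟨0, hd⟩ with hb
  have hAgr : Agr (∅ : Finset ιB) (Finset.univ : Finset ιA) (b, f) (b, g) :=
    ⟨fun x _ => rfl, fun x hx => absurd (Finset.mem_univ _) hx⟩
  have h1 := congrFun (congrFun hE (b, f)) (b, g)
  have hLHS : EE (∅ : Finset ιB) (Finset.univ : Finset ιA) M (b, f) (b, g) =
      kap ιB ιA d * ((Fintype.card (Fn ιA d) : ℂ) *
        trOut (Finset.univ : Finset ιB) (Finset.univ : Finset ιA) M f g) := by
    show (if Agr (∅ : Finset ιB) (Finset.univ : Finset ιA) (b, f) (b, g) then _ else 0) = _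
    rw [if_pos hAgr]
    congr 1
    have e0 : ∀ R : Pt ιB ιA d,
        M (OV (∅ : Finset ιB) (Finset.univ : Finset ιA) (b, f) R)
          (OV (∅ : Finset ιB) (Finset.univ : Finset ιA) (b, g) R) =
        M (R.1, f) (R.1, g) := by
      intro R
      rw [show OV (∅ : Finset ιB) (Finset.univ : Finset ιA) (b, f) R = (R.1, f) from
          Prod.ext (ov_empty b R.1) (ov_univ f R.2),
        show OV (∅ : Finset ιB) (Finset.univ : Finset ιA) (b, g) R = (R.1, g) from
          Prod.ext (ov_empty b R.1) (ov_univ g R.2)]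
    rw [Fintype.sum_congr _ _ e0]
    rw [Fintype.sum_prod_type (f := fun R : Pt ιB ιA d => M (R.1, f) (R.1, g))]
    simp only [Finset.sum_const, Finset.card_univ, nsmul_eq_mul]
    rw [← Finset.mul_sum]
    rfl
  rw [hLHS] at h1
  have hRHS : (kap ιB ιA d • (1 : Mat ιB ιA d)) (b, f) (b, g) =
      kap ιB ιA d * (if f = g then 1 else 0) := by
    simp [Matrix.smul_apply, Matrix.one_apply, Prod.ext_iff]
  rw [hRHS] at h1
  have h2 := mul_left_cancel₀ (kap_ne_zero hd) h1
  have hcard : (Fintype.card (Fn ιA d) : ℂ) =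
      (d : ℂ) ^ ((Finset.univ : Finset ιA).card) := by
    rw [card_fun_finset]
    push_cast
    rfl
  rw [hcard] at h2
  have h3 : trOut (Finset.univ : Finset ιB) (Finset.univ : Finset ιA) M f g =
      ((d : ℂ) ^ ((Finset.univ : Finset ιA).card))⁻¹ * (if f = g then 1 else 0) := by
    rw [← h2, ← mul_assoc, inv_mul_cancel₀ (pow_ne_zero _ hd0), one_mul]
  show trOut (Finset.univ : Finset ιB) (Finset.univ : Finset ιA) M f g = _
  rw [h3]
  simp [Matrix.smul_apply, Matrix.one_apply, one_div]

end Pair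
end HPTPaux

open HPTPaux

/-- HPTP marginal problem, Choi form: a compatible family of
Hermitian trace-one Choi operators `J i` on subsets `ℬ i`, `𝒜 i` covering the
output and input index sets, each satisfying the trace-preservation condition
`Tr_{ℬ i} (J i) = 𝟙 / d^{|𝒜 i|}`, admits a global Hermitian trace-one
operator `J` with `Tr_{I_B} J = 𝟙 / d^{|I_A|}` whose marginals are the `J i`. -/
theorem hptp_marginal_problem
    (d : ℕ) (hd : 1 ≤ d) (k : ℕ)
    (𝒜 : Fin k → Finset ιA) (ℬ : Fin k → Finset ιB)
    (hcoverA : Finset.univ.biUnion 𝒜 = Finset.univ)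
    (hcoverB : Finset.univ.biUnion ℬ = Finset.univ)
    (J : ∀ i : Fin k,
      Matrix (({x // x ∈ ℬ i} → Fin d) × ({x // x ∈ 𝒜 i} → Fin d))
        (({x // x ∈ ℬ i} → Fin d) × ({x // x ∈ 𝒜 i} → Fin d)) ℂ)
    (hHerm : ∀ i, (J i).IsHermitian)
    (hTr : ∀ i, (J i).trace = 1)
    (hTP : ∀ i, trOut (ℬ i) (𝒜 i) (J i) = (1 / (d : ℂ) ^ ((𝒜 i).card)) • 1)
    (hcompat : ∀ i j : Fin k,
      ptr2 (ℬ i) (ℬ i ∩ ℬ j) (𝒜 i) (𝒜 i ∩ 𝒜 j) (J i) =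
        ptr2 (ℬ j) (ℬ i ∩ ℬ j) (𝒜 j) (𝒜 i ∩ 𝒜 j) (J j)) :
    ∃ Jglob : Matrix
        (({x // x ∈ (Finset.univ : Finset ιB)} → Fin d) ×
          ({x // x ∈ (Finset.univ : Finset ιA)} → Fin d))
        (({x // x ∈ (Finset.univ : Finset ιB)} → Fin d) ×
          ({x // x ∈ (Finset.univ : Finset ιA)} → Fin d)) ℂ,
      Jglob.IsHermitian ∧ Jglob.trace = 1 ∧
      trOut Finset.univ Finset.univ Jglob =
        (1 / (d : ℂ) ^ ((Finset.univ : Finset ιA).card)) • 1 ∧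
      ∀ i : Fin k, ptr2 Finset.univ (ℬ i) Finset.univ (𝒜 i) Jglob = J i := by
  classical
  rcases Nat.eq_zero_or_pos k with hk0 | hkpos
  · subst hk0
    have hBe : (Finset.univ : Finset ιB) = ∅ := by
      rw [← hcoverB]; simp
    have hAe : (Finset.univ : Finset ιA) = ∅ := by
      rw [← hcoverA]; simp
    haveI hBE : IsEmpty {x // x ∈ (Finset.univ : Finset ιB)} :=
      ⟨fun x => by rw [hBe] at x; exact Finset.notMem_empty _ x.2⟩
    haveI hAE : IsEmpty {x // x ∈ (Finset.univ : Finset ιA)} :=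
      ⟨fun x => by rw [hAe] at x; exact Finset.notMem_empty _ x.2⟩
    refine ⟨1, Matrix.isHermitian_one, ?_, ?_, fun i => Fin.elim0 i⟩
    · rw [Matrix.trace_one]
      rw [Fintype.card_prod, card_fun_finset, card_fun_finset]
      rw [show (Finset.univ : Finset ιB).card = 0 from by rw [hBe]; rfl,
        show (Finset.univ : Finset ιA).card = 0 from by rw [hAe]; rfl]
      norm_num
    · funext f g
      show (∑ h : Fn ιB d, (1 : Mat ιB ιA d) (h, f) (h, g)) = _
      rw [Fintype.sum_unique (fun h : Fn ιB d => (1 : Mat ιB ιA d) (h, f) (h, g))]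
      rw [show (Finset.univ : Finset ιA).card = 0 from by rw [hAe]; rfl]
      simp [Matrix.one_apply, Matrix.smul_apply, Prod.ext_iff]
  · set L : (i : Fin k) → Mat ιB ιA d := fun i => emb (ℬ i) (𝒜 i) (J i) with hL
    set Jg : Mat ιB ιA d := ∑ TB ∈ (Finset.univ : Finset ιB).powerset,
      ∑ TA ∈ (Finset.univ : Finset ιA).powerset,
        (if h : (∃ i : Fin k, TB ⊆ ℬ i ∧ TA ⊆ 𝒜 i) then CC TB TA (L h.choose) else 0)
      with hJg
    have fact1 : ∀ i j : Fin k,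
        EE (ℬ i ∩ ℬ j) (𝒜 i ∩ 𝒜 j) (L i) = EE (ℬ i ∩ ℬ j) (𝒜 i ∩ 𝒜 j) (L j) := by
      intro i j
      rw [hL]
      rw [EE_emb hd Finset.inter_subset_left Finset.inter_subset_left (J i),
        EE_emb hd Finset.inter_subset_right Finset.inter_subset_right (J j),
        hcompat i j]
    have fact2 : ∀ (TB : Finset ιB) (TA : Finset ιA) (i j : Fin k),
        TB ⊆ ℬ i → TA ⊆ 𝒜 i → TB ⊆ ℬ j → TA ⊆ 𝒜 j →
          CC TB TA (L i) = CC TB TA (L j) := by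
      intro TB TA i j h1 h2 h3 h4
      rw [← CC_of_EE hd (Finset.subset_inter h1 h3) (Finset.subset_inter h2 h4) (L i),
        fact1 i j,
        CC_of_EE hd (Finset.subset_inter h1 h3) (Finset.subset_inter h2 h4) (L j)]
    have fact3 : ∀ i : Fin k,
        EE (∅ : Finset ιB) (𝒜 i) (L i) = kap ιB ιA d • (1 : Mat ιB ιA d) := by
      intro i
      rw [hL]
      rw [EE_emb hd (Finset.empty_subset _) (le_refl _) (J i)]
      have hY : ptr2 (ℬ i) (∅ : Finset ιB) (𝒜 i) (𝒜 i) (J i) =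
          (1 / (d : ℂ) ^ ((𝒜 i).card)) •
            (1 : Matrix (({x // x ∈ (∅ : Finset ιB)} → Fin d) × ({x // x ∈ 𝒜 i} → Fin d))
              (({x // x ∈ (∅ : Finset ιB)} → Fin d) × ({x // x ∈ 𝒜 i} → Fin d)) ℂ) := by
        haveI : IsEmpty {x // x ∈ (∅ : Finset ιB)} :=
          ⟨fun x => Finset.notMem_empty _ x.2⟩
        funext p q
        rw [ptr2_empty_trOut, hTP i]
        have hpq1 : p.1 = q.1 := Subsingleton.elim _ _
        simp [Matrix.smul_apply, Matrix.one_apply, Prod.ext_iff, hpq1]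
      rw [hY, emb_smul_one]
      congr 1
      rw [cst, kap_eq_pow, Finset.sdiff_empty, one_div, ← mul_inv, ← pow_add]
      congr 1
      have h1 := Finset.card_sdiff_of_subset (Finset.subset_univ (𝒜 i))
      have h2 := Finset.card_le_card (Finset.subset_univ (𝒜 i))
      have h3 : ((Finset.univ : Finset ιA) \ 𝒜 i).card =
          (Finset.univ : Finset ιA).card - (𝒜 i).card := h1
      congr 1
      omega
    have fact4 : ∀ (TA : Finset ιA) (i : Fin k), TA ⊆ 𝒜 i → TA ≠ ∅ →
        CC (∅ : Finset ιB) TA (L i) = 0 := by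
      intro TA i hTA hne
      rw [← CC_of_EE hd (le_refl (∅ : Finset ιB)) hTA (L i), fact3 i,
        CC_smul_one_zero hd (fun hc => hne hc.2)]
    have fact5 : ∀ j : Fin k, EE (ℬ j) (𝒜 j) Jg = L j := by
      intro j
      rw [hJg, EE_sum]
      have step : ∀ TB ∈ (Finset.univ : Finset ιB).powerset,
          (EE (ℬ j) (𝒜 j) (∑ TA ∈ (Finset.univ : Finset ιA).powerset,
            (if h : (∃ i : Fin k, TB ⊆ ℬ i ∧ TA ⊆ 𝒜 i) then CC TB TA (L h.choose) else 0))) =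
          (if TB ⊆ ℬ j then
            ∑ TA ∈ (𝒜 j).powerset, CC TB TA (L j) else 0) := by
        intro TB _
        rw [EE_sum]
        have inner : ∀ TA ∈ (Finset.univ : Finset ιA).powerset,
            (EE (ℬ j) (𝒜 j) (if h : (∃ i : Fin k, TB ⊆ ℬ i ∧ TA ⊆ 𝒜 i) then
              CC TB TA (L h.choose) else 0)) =
            (if TB ⊆ ℬ j ∧ TA ⊆ 𝒜 j then CC TB TA (L j) else 0) := by
          intro TA _
          by_cases hadm : ∃ i : Fin k, TB ⊆ ℬ i ∧ TA ⊆ 𝒜 i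
          · rw [dif_pos hadm, EE_CC hd]
            by_cases hsub : TB ⊆ ℬ j ∧ TA ⊆ 𝒜 j
            · rw [if_pos hsub, if_pos hsub]
              exact fact2 TB TA hadm.choose j hadm.choose_spec.1 hadm.choose_spec.2
                hsub.1 hsub.2
            · rw [if_neg hsub, if_neg hsub]
          · rw [dif_neg hadm, EE_zero, if_neg (fun hsub => hadm ⟨j, hsub⟩)]
        rw [Finset.sum_congr rfl inner]
        by_cases hTB : TB ⊆ ℬ j
        · rw [if_pos hTB]
          have e3 : ∀ TA ∈ (Finset.univ : Finset ιA).powerset,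
              (if TB ⊆ ℬ j ∧ TA ⊆ 𝒜 j then CC TB TA (L j) else 0) =
                (if TA ⊆ 𝒜 j then CC TB TA (L j) else 0) := by
            intro TA _
            by_cases hTA : TA ⊆ 𝒜 j <;> simp [hTA, hTB]
          rw [Finset.sum_congr rfl e3, Finset.sum_ite, Finset.sum_const_zero, add_zero]
          apply Finset.sum_congr _ (fun _ _ => rfl)
          ext TA
          simp [Finset.mem_powerset, Finset.subset_univ]
        · rw [if_neg hTB]
          have e3 : ∀ TA ∈ (Finset.univ : Finset ιA).powerset,
              (if TB ⊆ ℬ j ∧ TA ⊆ 𝒜 j then CC TB TA (L j) else 0) = 0 := by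
            intro TA _
            rw [if_neg (fun hc => hTB hc.1)]
          rw [Finset.sum_congr rfl e3, Finset.sum_const_zero]
      rw [Finset.sum_congr rfl step]
      rw [Finset.sum_ite, Finset.sum_const_zero, add_zero]
      have hfilter : ((Finset.univ : Finset ιB).powerset.filter (fun TB => TB ⊆ ℬ j)) =
          (ℬ j).powerset := by
        ext TB
        simp [Finset.mem_powerset, Finset.subset_univ]
      rw [hfilter, CC_decomp (ℬ j) (𝒜 j) (L j)]
      rw [hL]
      rw [EE_emb hd (le_refl _) (le_refl _) (J j), ptr2_self]
    have fact6 : EE (∅ : Finset ιB) (Finset.univ : Finset ιA) Jg =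
        kap ιB ιA d • (1 : Mat ιB ιA d) := by
      rw [hJg, EE_sum]
      have step : ∀ TB ∈ (Finset.univ : Finset ιB).powerset,
          (EE (∅ : Finset ιB) (Finset.univ : Finset ιA)
            (∑ TA ∈ (Finset.univ : Finset ιA).powerset,
            (if h : (∃ i : Fin k, TB ⊆ ℬ i ∧ TA ⊆ 𝒜 i) then CC TB TA (L h.choose) else 0))) =
          (if TB = ∅ then kap ιB ιA d • (1 : Mat ιB ιA d) else 0) := by
        intro TB _
        rw [EE_sum]
        have inner : ∀ TA ∈ (Finset.univ : Finset ιA).powerset,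
            (EE (∅ : Finset ιB) (Finset.univ : Finset ιA)
              (if h : (∃ i : Fin k, TB ⊆ ℬ i ∧ TA ⊆ 𝒜 i) then
                CC TB TA (L h.choose) else 0)) =
            (if TA = ∅ ∧ TB = ∅ then kap ιB ιA d • (1 : Mat ιB ιA d) else 0) := by
          intro TA _
          by_cases hadm : ∃ i : Fin k, TB ⊆ ℬ i ∧ TA ⊆ 𝒜 i
          · rw [dif_pos hadm, EE_CC hd]
            by_cases hTB0 : TB = ∅
            · subst hTB0
              rw [if_pos ⟨le_refl _, Finset.subset_univ _⟩]
              by_cases hTA0 : TA = ∅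
              · subst hTA0
                rw [CC_empty, EE_empty hd]
                rw [show (L hadm.choose).trace = 1 from by
                  rw [hL]; rw [trace_emb hd]; exact hTr _]
                rw [if_pos ⟨rfl, rfl⟩, mul_one]
              · rw [fact4 TA hadm.choose hadm.choose_spec.2 hTA0,
                  if_neg (fun hc => hTA0 hc.1)]
            · have hTBn : ¬ ((TB : Finset ιB) ⊆ (∅ : Finset ιB) ∧
                  TA ⊆ (Finset.univ : Finset ιA)) := by
                intro hc
                exact hTB0 (Finset.subset_empty.mp hc.1)
              rw [if_neg hTBn, if_neg (fun hc => hTB0 hc.2)]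
          · rw [dif_neg hadm, EE_zero]
            have hne : ¬ (TA = ∅ ∧ TB = ∅) := by
              rintro ⟨h1, h2⟩
              subst h1; subst h2
              exact hadm ⟨⟨0, hkpos⟩, Finset.empty_subset _, Finset.empty_subset _⟩
            rw [if_neg hne]
        rw [Finset.sum_congr rfl inner]
        have e4 : ∀ TA ∈ (Finset.univ : Finset ιA).powerset,
            (if TA = ∅ ∧ TB = ∅ then kap ιB ιA d • (1 : Mat ιB ιA d) else 0) =
              (if TA = ∅ then (if TB = ∅ then kap ιB ιA d • (1 : Mat ιB ιA d) else 0)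
                else 0) := by
          intro TA _
          by_cases h1 : TA = ∅ <;> by_cases h2 : TB = ∅ <;> simp [h1, h2]
        rw [Finset.sum_congr rfl e4]
        rw [Finset.sum_ite_eq' (Finset.univ : Finset ιA).powerset ∅
          (fun _ => (if TB = ∅ then kap ιB ιA d • (1 : Mat ιB ιA d) else 0))]
        rw [if_pos (Finset.empty_mem_powerset _)]
      rw [Finset.sum_congr rfl step]
      rw [Finset.sum_ite_eq' (Finset.univ : Finset ιB).powerset ∅
        (fun _ => kap ιB ιA d • (1 : Mat ιB ιA d))]
      rw [if_pos (Finset.empty_mem_powerset _)]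
    have hLh : ∀ i, (L i)ᴴ = L i := by
      intro i
      rw [hL]
      rw [conjTranspose_emb, hHerm i]
    refine ⟨Jg, ?_, ?_, ?_, ?_⟩
    · show Jgᴴ = Jg
      rw [hJg, Matrix.conjTranspose_sum]
      apply Finset.sum_congr rfl
      intro TB _
      rw [Matrix.conjTranspose_sum]
      apply Finset.sum_congr rfl
      intro TA _
      by_cases hadm : ∃ i : Fin k, TB ⊆ ℬ i ∧ TA ⊆ 𝒜 i
      · rw [dif_pos hadm, conjTranspose_CC, hLh]
      · rw [dif_neg hadm, Matrix.conjTranspose_zero]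
    · rw [hJg, Matrix.trace_sum]
      have step : ∀ TB ∈ (Finset.univ : Finset ιB).powerset,
          (∑ TA ∈ (Finset.univ : Finset ιA).powerset,
            (if h : (∃ i : Fin k, TB ⊆ ℬ i ∧ TA ⊆ 𝒜 i) then CC TB TA (L h.choose) else 0)).trace =
          (if TB = ∅ then (1 : ℂ) else 0) := by
        intro TB _
        rw [Matrix.trace_sum]
        have inner : ∀ TA ∈ (Finset.univ : Finset ιA).powerset,
            (if h : (∃ i : Fin k, TB ⊆ ℬ i ∧ TA ⊆ 𝒜 i) then
              CC TB TA (L h.choose) else 0).trace =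
            (if TA = ∅ then (if TB = ∅ then (1 : ℂ) else 0) else 0) := by
          intro TA _
          by_cases hadm : ∃ i : Fin k, TB ⊆ ℬ i ∧ TA ⊆ 𝒜 i
          · rw [dif_pos hadm, trace_CC hd]
            rw [show (L hadm.choose).trace = 1 from by
              rw [hL]; rw [trace_emb hd]; exact hTr _]
            rw [mul_one]
            by_cases hTA0 : TA = ∅ <;> by_cases hTB0 : TB = ∅ <;>
              simp [hTA0, hTB0]
          · rw [dif_neg hadm, Matrix.trace_zero]
            have hne : ¬ (TB = ∅ ∧ TA = ∅) := by
              rintro ⟨h1, h2⟩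
              subst h1; subst h2
              exact hadm ⟨⟨0, hkpos⟩, Finset.empty_subset _, Finset.empty_subset _⟩
            by_cases hTA0 : TA = ∅
            · have hTB0 : TB ≠ ∅ := fun he => hne ⟨he, hTA0⟩
              rw [if_pos hTA0, if_neg hTB0]
            · rw [if_neg hTA0]
        rw [Finset.sum_congr rfl inner]
        rw [Finset.sum_ite_eq' (Finset.univ : Finset ιA).powerset ∅
          (fun _ => (if TB = ∅ then (1 : ℂ) else 0))]
        rw [if_pos (Finset.empty_mem_powerset _)]
      rw [Finset.sum_congr rfl step]
      rw [Finset.sum_ite_eq' (Finset.univ : Finset ιB).powerset ∅ (fun _ => (1 : ℂ))]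
      rw [if_pos (Finset.empty_mem_powerset _)]
    · exact trOut_of_EE hd fact6
    · intro i
      exact ptr2_from_EE hd (by rw [fact5 i, hL])
end
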